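/- arXiv:2012.06286 — 4 statements merged into one kernel-verified Lean document; each statement's English description precedes it below -/
import Mathlib

section
/- Let σ₁,…,σ_d be pairwise distinct branches of 𝒯 and ρ ∈ ℕ be such that the final segments σ_{1,>ρ},…,σ_{d,>ρ} are pairwise incomparable. Then for every finitely supported vector x with min(supp x) > ρ and supp x ⊆ σ₁ ∪ ⋯ ∪ σ_d, one has ‖x‖ = ‖x|_{σ₁} + ⋯ + x|_{σ_d}‖ = (∑_{i=1}^d ‖x|_{σ_i}‖^p)^{1/p}, where ‖·‖ is the JT_{2,p} norm. -/
open Set Filter Topology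

/-- `k` is an immediate successor of `n` in the order `le`. -/
def ImmSucc (le : ℕ → ℕ → Prop) (n k : ℕ) : Prop :=
  le n k ∧ n ≠ k ∧ ∀ m, le n m → le m k → m = n ∨ m = k

/-- The tree `𝒯`: a partial order on `ℕ` compatible with the usual order, in which the set of
strict predecessors of every element is finite and linearly ordered, and every element has
infinitely many immediate successors. -/
structure IsJTTree (le : ℕ → ℕ → Prop) : Prop where
  refl : ∀ n, le n n
  antisymm : ∀ {m n}, le m n → le n m → m = n
  trans : ∀ {a b c}, le a b → le b c → le a c
  compat : ∀ {m n}, le m n → m ≤ n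
  pred_finite : ∀ n, {m | le m n ∧ m ≠ n}.Finite
  pred_linear : ∀ n a b, le a n → le b n → le a b ∨ le b a
  succ_infinite : ∀ n, {k | ImmSucc le n k}.Infinite

/-- A segment of the tree: a nonempty set of the form `{k : m ⪯ k ∧ k ⪯ n}`. -/
def IsSegment (le : ℕ → ℕ → Prop) (s : Set ℕ) : Prop :=
  ∃ m n, le m n ∧ s = {k | le m k ∧ le k n}

/-- A branch: a maximal linearly ordered subset of `ℕ`. -/
def IsBranch (le : ℕ → ℕ → Prop) (σ : Set ℕ) : Prop :=
  IsChain le σ ∧ ∀ τ, IsChain le τ → σ ⊆ τ → σ = τ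

/-- `‖x‖_s = (∑_{i ∈ s} x(i)²)^(1/2)`. -/
noncomputable def segNorm (x : ℕ → ℝ) (s : Set ℕ) : ℝ :=
  Real.sqrt (∑' i, s.indicator (fun j => (x j) ^ 2) i)

/-- The `JT_{2,p}` norm on finitely supported sequences:
`‖x‖ = sup {(∑_k ‖x‖_{s_k}^p)^(1/p) : s₁,…,s_n pairwise disjoint segments}`. -/
noncomputable def jtNorm (le : ℕ → ℕ → Prop) (p : ℝ) (x : ℕ → ℝ) : ℝ :=
  sSup { r : ℝ | ∃ (n : ℕ) (s : Fin n → Set ℕ),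
    (∀ k, IsSegment le (s k)) ∧
    (∀ k l, k ≠ l → Disjoint (s k) (s l)) ∧
    r = (∑ k : Fin n, segNorm x (s k) ^ p) ^ (1 / p) }

/-- A block sequence of finitely supported vectors. -/
def IsBlockSeq (x : ℕ → ℕ → ℝ) : Prop :=
  (∀ n, (Function.support (x n)).Finite) ∧
  ∀ n i j, x n i ≠ 0 → x (n + 1) j ≠ 0 → i < j

/-- The final segment `σ_{>l} = {k ∈ σ : k > l}`. -/
def finalSeg (σ : Set ℕ) (l : ℕ) : Set ℕ := {k ∈ σ | l < k}

/-- Two final segments are incomparable when their least elements are `le`-incomparable. -/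
def IncompFinal (le : ℕ → ℕ → Prop) (A B : Set ℕ) : Prop :=
  A.Nonempty ∧ B.Nonempty ∧ ¬ le (sInf A) (sInf B) ∧ ¬ le (sInf B) (sInf A)

-- auxiliary lemmas

lemma branch_le_of_le {le : ℕ → ℕ → Prop} (hT : IsJTTree le) {σ : Set ℕ}
    (hσ : IsBranch le σ) {a b : ℕ} (ha : a ∈ σ) (hb : b ∈ σ) (hab : a ≤ b) : le a b := by
  rcases eq_or_ne a b with rfl | h
  · exact hT.refl a
  · rcases hσ.1 ha hb h with h' | h'
    · exact h'
    · have : a = b := le_antisymm hab (hT.compat h')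
      exact this ▸ hT.refl a

lemma mem_branch_of_le {le : ℕ → ℕ → Prop} (hT : IsJTTree le) {σ : Set ℕ}
    (hσ : IsBranch le σ) {k n : ℕ} (hkn : le k n) (hn : n ∈ σ) : k ∈ σ := by
  have hch : IsChain le (insert k σ) := by
    refine hσ.1.insert fun b hb hne => ?_
    rcases eq_or_ne b n with rfl | hbn
    · exact Or.inl hkn
    · rcases hσ.1 hb hn hbn with h' | h'
      · exact (hT.pred_linear n b k h' hkn).symm
      · exact Or.inl (hT.trans hkn h')
  have := hσ.2 _ hch (Set.subset_insert _ _)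
  rw [this]; exact Set.mem_insert _ _

lemma real_add_rpow_le {q : ℝ} (hq : 1 ≤ q) {a b : ℝ} (ha : 0 ≤ a) (hb : 0 ≤ b) :
    a ^ q + b ^ q ≤ (a + b) ^ q := by
  lift a to NNReal using ha
  lift b to NNReal using hb
  exact_mod_cast NNReal.add_rpow_le_rpow_add a b hq

lemma sum_rpow_le_rpow_sum {ι : Type*} {q : ℝ} (hq : 1 ≤ q) (t : Finset ι) (b : ι → ℝ) :
    (∀ i ∈ t, 0 ≤ b i) → ∑ i ∈ t, b i ^ q ≤ (∑ i ∈ t, b i) ^ q := by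
  induction t using Finset.cons_induction with
  | empty => intro _; simp [Real.zero_rpow (by linarith : q ≠ 0)]
  | cons a t ha ih =>
    intro hb
    have h1 : 0 ≤ b a := hb a (Finset.mem_cons_self a t)
    have h2 : ∀ i ∈ t, 0 ≤ b i := fun i hi => hb i (Finset.mem_cons_of_mem hi)
    rw [Finset.sum_cons, Finset.sum_cons]
    calc b a ^ q + ∑ i ∈ t, b i ^ q ≤ b a ^ q + (∑ i ∈ t, b i) ^ q := by
          linarith [ih h2]
      _ ≤ (b a + ∑ i ∈ t, b i) ^ q :=
          real_add_rpow_le hq h1 (Finset.sum_nonneg h2)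

lemma jt_cross {le : ℕ → ℕ → Prop} (hT : IsJTTree le) {d : ℕ} {σ : Fin d → Set ℕ}
    (hσ : ∀ i, IsBranch le (σ i)) {ρ : ℕ}
    (hinc : ∀ i j, i ≠ j → IncompFinal le (finalSeg (σ i) ρ) (finalSeg (σ j) ρ))
    {i j : Fin d} (hij : i ≠ j) {k l : ℕ} (hk : k ∈ σ i) (hl : l ∈ σ j)
    (hρk : ρ < k) (hρl : ρ < l) : ¬ le k l := by
  intro hkl
  obtain ⟨hA, hB, hab, hba⟩ := hinc i j hij
  set a := sInf (finalSeg (σ i) ρ) with haa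
  set b := sInf (finalSeg (σ j) ρ) with hbb
  have haA : a ∈ finalSeg (σ i) ρ := Nat.sInf_mem hA
  have hbB : b ∈ finalSeg (σ j) ρ := Nat.sInf_mem hB
  have hkA : k ∈ finalSeg (σ i) ρ := ⟨hk, hρk⟩
  have hlB : l ∈ finalSeg (σ j) ρ := ⟨hl, hρl⟩
  have hak : le a k := branch_le_of_le hT (hσ i) haA.1 hk (Nat.sInf_le hkA)
  have hbl : le b l := branch_le_of_le hT (hσ j) hbB.1 hl (Nat.sInf_le hlB)
  have hal : le a l := hT.trans hak hkl
  rcases hT.pred_linear l a b hal hbl with h | h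
  · exact hab h
  · have hbσi : b ∈ σ i := mem_branch_of_le hT (hσ i) h haA.1
    have hbA : b ∈ finalSeg (σ i) ρ := ⟨hbσi, hbB.2⟩
    have h1 : a ≤ b := Nat.sInf_le hbA
    have h2 : a = b := le_antisymm h1 (hT.compat h)
    exact hab (h2 ▸ hT.refl a)

lemma jt_main (le : ℕ → ℕ → Prop) (hT : IsJTTree le) (p : ℝ) (hp : 2 < p)
    (d : ℕ) (σ : Fin d → Set ℕ) (hσ : ∀ i, IsBranch le (σ i)) (ρ : ℕ)
    (hinc : ∀ i j, i ≠ j → IncompFinal le (finalSeg (σ i) ρ) (finalSeg (σ j) ρ))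
    (x : ℕ → ℝ) (hxfin : (Function.support x).Finite)
    (hxmin : ∀ i, x i ≠ 0 → ρ < i)
    (hxsupp : ∀ k, x k ≠ 0 → ∃ i, k ∈ σ i) :
    jtNorm le p x = (∑ i : Fin d, segNorm x (σ i) ^ p) ^ (1 / p) := by
  classical
  have hp0 : 0 < p := by linarith
  have hpne : p ≠ 0 := ne_of_gt hp0
  have hq1 : 1 ≤ p / 2 := by linarith
  set F := hxfin.toFinset with hF
  have hFmem : ∀ j, j ∈ F ↔ x j ≠ 0 := fun j => by
    simp [hF, Set.Finite.mem_toFinset, Function.mem_support]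
  set Fil : Set ℕ → Finset ℕ := fun s => F.filter (· ∈ s) with hFildef
  have hFilmem : ∀ (s : Set ℕ) (j : ℕ), j ∈ Fil s ↔ x j ≠ 0 ∧ j ∈ s := by
    intro s j
    rw [hFildef]
    simp [Finset.mem_filter, hFmem]
  set G : Set ℕ → ℝ := fun s => ∑ j ∈ Fil s, x j ^ 2 with hGdef
  have hGeq : ∀ s : Set ℕ, G s = ∑ j ∈ Fil s, x j ^ 2 := fun s => rfl
  have hGnonneg : ∀ s, 0 ≤ G s := fun s => Finset.sum_nonneg fun j _ => sq_nonneg _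
  have hsegG : ∀ s : Set ℕ, segNorm x s = Real.sqrt (G s) := by
    intro s
    unfold segNorm
    have h0 : ∀ j ∉ Fil s, s.indicator (fun j => x j ^ 2) j = 0 := by
      intro j hj
      by_cases hjs : j ∈ s
      · have hxj : x j = 0 := by
          by_contra h
          exact hj ((hFilmem s j).2 ⟨h, hjs⟩)
        simp [Set.indicator_of_mem hjs, hxj]
      · simp [Set.indicator_of_notMem hjs]
    rw [tsum_eq_sum h0, hGeq]
    refine congrArg Real.sqrt ?_
    refine Finset.sum_congr rfl fun j hj => ?_
    exact Set.indicator_of_mem ((hFilmem s j).1 hj).2 _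
  have hsegp : ∀ s : Set ℕ, segNorm x s ^ p = G s ^ (p / 2) := by
    intro s
    rw [hsegG s, Real.sqrt_eq_rpow, ← Real.rpow_mul (hGnonneg s)]
    congr 1; ring
  -- each segment meets the support of x inside a single branch
  have hsegbranch : ∀ s : Set ℕ, IsSegment le s → (Fil s).Nonempty →
      ∃ i, Fil s = Fil (s ∩ σ i) := by
    rintro s hs ⟨w, hw⟩
    obtain ⟨hxw, hws⟩ := (hFilmem s w).1 hw
    obtain ⟨i₀, hi₀⟩ := hxsupp w hxw
    refine ⟨i₀, Finset.ext fun u => ?_⟩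
    rw [hFilmem, hFilmem]
    constructor
    · rintro ⟨hxu, hus⟩
      obtain ⟨i₁, hi₁⟩ := hxsupp u hxu
      have hui₀ : u ∈ σ i₀ := by
        by_cases h : i₁ = i₀
        · exact h ▸ hi₁
        · obtain ⟨m, n, hmn, rfl⟩ := hs
          rcases hT.pred_linear n u w hus.2 hws.2 with hc | hc
          · exact absurd hc
              (jt_cross hT hσ hinc h hi₁ hi₀ (hxmin u hxu) (hxmin w hxw))
          · exact absurd hc
              (jt_cross hT hσ hinc (fun e => h e.symm) hi₀ hi₁ (hxmin w hxw) (hxmin u hxu))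
      exact ⟨hxu, hus, hui₀⟩
    · rintro ⟨hxu, hus, _⟩
      exact ⟨hxu, hus⟩
  -- upper bound
  have hA : ∀ (n : ℕ) (s : Fin n → Set ℕ), (∀ k, IsSegment le (s k)) →
      (∀ k l, k ≠ l → Disjoint (s k) (s l)) →
      ∑ k : Fin n, segNorm x (s k) ^ p ≤ ∑ i : Fin d, segNorm x (σ i) ^ p := by
    intro n s hseg hdisj
    simp only [hsegp]
    calc ∑ k : Fin n, G (s k) ^ (p / 2)
        ≤ ∑ k : Fin n, ∑ i : Fin d, G (s k ∩ σ i) ^ (p / 2) := by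
          refine Finset.sum_le_sum fun k _ => ?_
          by_cases h : (Fil (s k)).Nonempty
          · obtain ⟨i₀, hi₀⟩ := hsegbranch (s k) (hseg k) h
            have hGe : G (s k) = G (s k ∩ σ i₀) := by rw [hGeq, hGeq, hi₀]
            rw [hGe]
            exact Finset.single_le_sum
              (f := fun i => G (s k ∩ σ i) ^ (p / 2))
              (fun i _ => Real.rpow_nonneg (hGnonneg _) _) (Finset.mem_univ i₀)
          · have hG0 : G (s k) = 0 := by
              rw [hGeq, Finset.not_nonempty_iff_eq_empty.1 h, Finset.sum_empty]
            rw [hG0, Real.zero_rpow (by linarith : p / 2 ≠ 0)]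
            exact Finset.sum_nonneg fun i _ => Real.rpow_nonneg (hGnonneg _) _
      _ = ∑ i : Fin d, ∑ k : Fin n, G (s k ∩ σ i) ^ (p / 2) := Finset.sum_comm
      _ ≤ ∑ i : Fin d, G (σ i) ^ (p / 2) := by
          refine Finset.sum_le_sum fun i _ => ?_
          have hkey : ∑ k : Fin n, G (s k ∩ σ i) ≤ G (σ i) := by
            simp only [hGeq]
            have hdisjF : ((Finset.univ : Finset (Fin n)) : Set (Fin n)).PairwiseDisjoint
                (fun k => Fil (s k ∩ σ i)) := by
              intro k _ l _ hkl
              refine Finset.disjoint_left.2 fun j hj hj' => ?_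
              exact Set.disjoint_left.1 (hdisj k l hkl)
                ((hFilmem _ j).1 hj).2.1 ((hFilmem _ j).1 hj').2.1
            rw [← Finset.sum_biUnion hdisjF]
            refine Finset.sum_le_sum_of_subset_of_nonneg ?_ ?_
            · intro j hj
              obtain ⟨k, _, hjk⟩ := Finset.mem_biUnion.1 hj
              obtain ⟨hxj, _, hjσ⟩ := (hFilmem _ j).1 hjk
              exact (hFilmem _ j).2 ⟨hxj, hjσ⟩
            · intro j _ _; exact sq_nonneg _
          calc ∑ k : Fin n, G (s k ∩ σ i) ^ (p / 2)
              ≤ (∑ k : Fin n, G (s k ∩ σ i)) ^ (p / 2) :=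
                sum_rpow_le_rpow_sum hq1 _ _ (fun k _ => hGnonneg _)
            _ ≤ G (σ i) ^ (p / 2) :=
                Real.rpow_le_rpow (Finset.sum_nonneg fun k _ => hGnonneg _) hkey
                  (by linarith)
  -- construction of an optimal family of segments
  set J := Finset.univ.filter (fun i : Fin d => (Fil (σ i)).Nonempty) with hJ
  have hJiff : ∀ i, i ∈ J ↔ (Fil (σ i)).Nonempty := fun i => by
    rw [hJ]; simp
  set mi : Fin d → ℕ := fun i =>
    if h : (Fil (σ i)).Nonempty then (Fil (σ i)).min' h else 0 with hmi
  set Mi : Fin d → ℕ := fun i =>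
    if h : (Fil (σ i)).Nonempty then (Fil (σ i)).max' h else 0 with hMi
  set t : Fin d → Set ℕ := fun i => {k | le (mi i) k ∧ le k (Mi i)} with ht
  have hkey : ∀ i : Fin d, (Fil (σ i)).Nonempty →
      IsSegment le (t i) ∧ t i ⊆ σ i ∧ (∀ k ∈ t i, ρ < k) ∧
      G (t i) = G (σ i) := by
    intro i h
    have hm : mi i = (Fil (σ i)).min' h := by rw [hmi]; exact dif_pos h
    have hM : Mi i = (Fil (σ i)).max' h := by rw [hMi]; exact dif_pos h
    have hmmem : mi i ∈ Fil (σ i) := by rw [hm]; exact Finset.min'_mem _ h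
    have hMmem : Mi i ∈ Fil (σ i) := by rw [hM]; exact Finset.max'_mem _ h
    have hmx : x (mi i) ≠ 0 := ((hFilmem _ _).1 hmmem).1
    have hmσ : mi i ∈ σ i := ((hFilmem _ _).1 hmmem).2
    have hMσ : Mi i ∈ σ i := ((hFilmem _ _).1 hMmem).2
    have hmM : le (mi i) (Mi i) :=
      branch_le_of_le hT (hσ i) hmσ hMσ
        (by rw [hm, hM]; exact Finset.min'_le _ _ (Finset.max'_mem _ h))
    have htmem : ∀ k, k ∈ t i ↔ le (mi i) k ∧ le k (Mi i) := fun k => by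
      rw [ht]; exact Iff.rfl
    refine ⟨⟨mi i, Mi i, hmM, by rw [ht]⟩, ?_, ?_, ?_⟩
    · intro k hk
      exact mem_branch_of_le hT (hσ i) ((htmem k).1 hk).2 hMσ
    · intro k hk
      exact lt_of_lt_of_le (hxmin _ hmx) (hT.compat ((htmem k).1 hk).1)
    · rw [hGeq, hGeq]
      refine Finset.sum_congr (Finset.ext fun j => ?_) fun _ _ => rfl
      rw [hFilmem, hFilmem]
      constructor
      · rintro ⟨hxj, hjt⟩
        exact ⟨hxj, mem_branch_of_le hT (hσ i) ((htmem j).1 hjt).2 hMσ⟩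
      · rintro ⟨hxj, hjσ⟩
        refine ⟨hxj, (htmem j).2 ⟨?_, ?_⟩⟩
        · exact branch_le_of_le hT (hσ i) hmσ hjσ
            (by rw [hm]; exact Finset.min'_le _ _ ((hFilmem _ j).2 ⟨hxj, hjσ⟩))
        · exact branch_le_of_le hT (hσ i) hjσ hMσ
            (by rw [hM]; exact Finset.le_max' _ _ ((hFilmem _ j).2 ⟨hxj, hjσ⟩))
  -- the candidate family indexed by Fin (card J)
  set e : Fin (Fintype.card {i // i ∈ J}) ≃ {i // i ∈ J} :=
    (Fintype.equivFin {i // i ∈ J}).symm with he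
  set s : Fin (Fintype.card {i // i ∈ J}) → Set ℕ := fun k => t ((e k) : Fin d) with hs
  have hsseg : ∀ k, IsSegment le (s k) := by
    intro k
    exact (hkey _ ((hJiff _).1 (e k).2)).1
  have hsdisj : ∀ k l, k ≠ l → Disjoint (s k) (s l) := by
    intro k l hkl
    have hne : ((e k) : Fin d) ≠ ((e l) : Fin d) := by
      intro h
      exact hkl (e.injective (Subtype.ext h))
    obtain ⟨_, hsubi, hρi, _⟩ := hkey _ ((hJiff _).1 (e k).2)
    obtain ⟨_, hsubj, hρj, _⟩ := hkey _ ((hJiff _).1 (e l).2)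
    rw [Set.disjoint_left]
    intro a hak hal
    exact jt_cross hT hσ hinc hne (hsubi hak) (hsubj hal) (hρi a hak) (hρj a hal)
      (hT.refl a)
  have hV : ∑ k, segNorm x (s k) ^ p = ∑ i : Fin d, segNorm x (σ i) ^ p := by
    calc ∑ k, segNorm x (s k) ^ p
        = ∑ a : {i // i ∈ J}, segNorm x (t (a : Fin d)) ^ p :=
          Equiv.sum_comp e (fun a : {i // i ∈ J} => segNorm x (t (a : Fin d)) ^ p)
      _ = ∑ i ∈ J, segNorm x (t i) ^ p :=
          Finset.sum_coe_sort J (fun i => segNorm x (t i) ^ p)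
      _ = ∑ i ∈ J, segNorm x (σ i) ^ p := by
          refine Finset.sum_congr rfl fun i hi => ?_
          obtain ⟨_, _, _, hfil⟩ := hkey i ((hJiff i).1 hi)
          rw [hsegG, hsegG, hfil]
      _ = ∑ i : Fin d, segNorm x (σ i) ^ p := by
          refine Finset.sum_subset (Finset.subset_univ J) fun i _ hi => ?_
          have h0 : Fil (σ i) = ∅ :=
            Finset.not_nonempty_iff_eq_empty.1 fun h => hi ((hJiff i).2 h)
          rw [hsegp, hGeq, h0, Finset.sum_empty,
            Real.zero_rpow (by linarith : p / 2 ≠ 0)]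
  refine IsGreatest.csSup_eq ⟨⟨Fintype.card {i // i ∈ J}, s, hsseg, hsdisj, by rw [hV]⟩, ?_⟩
  rintro r ⟨n, s', hseg', hdisj', rfl⟩
  exact Real.rpow_le_rpow
    (Finset.sum_nonneg fun k _ => Real.rpow_nonneg (Real.sqrt_nonneg _) p)
    (hA n s' hseg' hdisj') (by positivity)

theorem stmt0 (le : ℕ → ℕ → Prop) (hT : IsJTTree le) (p : ℝ) (hp : 2 < p)
    (d : ℕ) (σ : Fin d → Set ℕ) (hσ : ∀ i, IsBranch le (σ i))
    (hdist : Function.Injective σ) (ρ : ℕ)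
    (hinc : ∀ i j, i ≠ j → IncompFinal le (finalSeg (σ i) ρ) (finalSeg (σ j) ρ))
    (x : ℕ → ℝ) (hxfin : (Function.support x).Finite)
    (hxmin : ∀ i, x i ≠ 0 → ρ < i)
    (hxsupp : ∀ k, x k ≠ 0 → ∃ i, k ∈ σ i) :
    jtNorm le p x = jtNorm le p (fun k => ∑ i : Fin d, ((σ i).indicator x) k) ∧
    jtNorm le p x = (∑ i : Fin d, jtNorm le p ((σ i).indicator x) ^ p) ^ (1 / p) := by
  have hpne : p ≠ 0 := by positivity
  have hxeq : (fun k => ∑ i : Fin d, ((σ i).indicator x) k) = x := by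
    funext k
    by_cases hk : x k = 0
    · rw [hk]
      exact Finset.sum_eq_zero fun i _ => by simp [Set.indicator_apply, hk]
    · obtain ⟨i₀, hi₀⟩ := hxsupp k hk
      rw [Finset.sum_eq_single i₀]
      · exact Set.indicator_of_mem hi₀ x
      · intro j _ hj
        apply Set.indicator_of_notMem
        intro hkj
        exact hj (by
          by_contra hne
          exact jt_cross hT hσ hinc hne hkj hi₀ (hxmin k hk) (hxmin k hk) (hT.refl k))
      · intro h; exact absurd (Finset.mem_univ i₀) h
  have h1 := jt_main le hT p hp d σ hσ ρ hinc x hxfin hxmin hxsupp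
  refine ⟨by rw [hxeq], ?_⟩
  rw [h1]
  congr 1
  refine Finset.sum_congr rfl fun i _ => ?_
  congr 1
  -- segNorm x (σ i) = jtNorm le p ((σ i).indicator x)
  have hfin' : (Function.support ((σ i).indicator x)).Finite := by
    refine hxfin.subset fun j hj => ?_
    simp only [Function.mem_support] at hj ⊢
    intro h
    exact hj (by simp [Set.indicator_apply, h])
  have h2 := jt_main le hT p hp 1 (fun _ => σ i) (fun _ => hσ i) ρ
    (by intro a b hab; exact absurd (Subsingleton.elim a b) hab)
    ((σ i).indicator x) hfin'
    (fun k hk => hxmin k (fun h => hk (by simp [Set.indicator_apply, h])))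
    (fun k hk => ⟨0, Set.mem_of_indicator_ne_zero hk⟩)
  have hind : segNorm ((σ i).indicator x) (σ i) = segNorm x (σ i) := by
    unfold segNorm
    congr 1
    refine tsum_congr fun j => ?_
    by_cases h : j ∈ σ i <;>
      simp [Set.indicator_of_mem, Set.indicator_of_notMem, h]
  have hnn : 0 ≤ segNorm x (σ i) := Real.sqrt_nonneg _
  rw [h2, Fin.sum_univ_one, hind, one_div, Real.rpow_rpow_inv hnn hpne]
end

section
/- Let (x_n) be a normalized block sequence in (c₀₀, ‖·‖_{JT_{2,p}}) such that lim_n ‖x_n|_σ‖ = 0 for every branch σ of 𝒯. Then for every ε > 0 and every n₀ ∈ ℕ there exists an infinite set L ⊆ ℕ such that for every segment s with min s ≤ n₀ there is at most one n ∈ L with ‖x_n|_s‖ ≥ ε. -/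
open Set Filter Topology

/-- Helper: finite sets of already-chosen elements for the Ramsey recursion. -/
noncomputable def rSeqAux (g : Finset ℕ → ℕ) : ℕ → Finset ℕ
  | 0 => ∅
  | k + 1 => insert (g (rSeqAux g k)) (rSeqAux g k)

lemma rSeqAux_mono (g : Finset ℕ → ℕ) : ∀ {k l : ℕ}, k ≤ l → rSeqAux g k ⊆ rSeqAux g l := by
  intro k l h
  induction l with
  | zero => simp [Nat.le_zero.mp h]
  | succ l ih =>
    rcases Nat.lt_or_ge k (l+1) with h' | h'
    · exact (ih (Nat.lt_succ_iff.mp h')).trans (by simp [rSeqAux, Finset.subset_insert])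
    · have : k = l + 1 := le_antisymm h h'
      subst this; rfl

/-- Every member of a nonprincipal-ish ultrafilter (extending cofinite) is infinite. -/
lemma mem_infinite_of_le_cofinite (U : Ultrafilter ℕ) (hU : (U : Filter ℕ) ≤ Filter.cofinite)
    {S : Set ℕ} (hS : S ∈ U) : S.Infinite := by
  intro hfin
  have h1 : Sᶜ ∈ U := hU hfin.compl_mem_cofinite
  have h2 : (∅ : Set ℕ) ∈ (U : Filter ℕ) := by
    have := Filter.inter_mem hS h1
    simpa using this
  exact (Filter.empty_notMem (U : Filter ℕ)) h2

/-- Infinite Ramsey theorem for pairs with two colours, on an infinite subset of ℕ. -/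
lemma ramsey2 (f : ℕ → ℕ → Bool) (M : Set ℕ) (hM : M.Infinite) :
    ∃ N, N ⊆ M ∧ N.Infinite ∧ ∃ b, ∀ n m, n ∈ N → m ∈ N → n < m → f n m = b := by
  classical
  -- an ultrafilter containing M and all cofinite sets
  have hne : (Filter.cofinite ⊓ Filter.principal M).NeBot := hM.cofinite_inf_principal_neBot
  obtain ⟨U, hU⟩ := Ultrafilter.exists_le (Filter.cofinite ⊓ Filter.principal M)
  have hUcof : (U : Filter ℕ) ≤ Filter.cofinite := hU.trans inf_le_left
  have hUM : M ∈ U := hU (by exact Filter.mem_inf_of_right (Filter.mem_principal_self M))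
  set c : ℕ → Bool := fun n => if {m | f n m = true} ∈ U then true else false with hc_def
  have hc : ∀ n, {m | f n m = c n} ∈ U := by
    intro n
    by_cases h : {m | f n m = true} ∈ U
    · simpa [hc_def, h] using h
    · have h2 : {m | f n m = true}ᶜ ∈ U := Ultrafilter.compl_mem_iff_notMem.2 h
      have : {m | f n m = true}ᶜ = {m | f n m = false} := by
        ext m; simp [Bool.not_eq_true]
      simp only [hc_def, if_neg h]
      rw [← this]; exact h2
  -- the target sets for the recursion
  set T : Finset ℕ → Set ℕ :=
    fun F => {m | m ∈ M ∧ (∀ n ∈ F, f n m = c n) ∧ ∀ n ∈ F, n < m} with hT_def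
  have hTne : ∀ F : Finset ℕ, (T F).Nonempty := by
    intro F
    have h1 : M ∩ ⋂ n ∈ F, {m | f n m = c n} ∈ U :=
      Filter.inter_mem hUM ((Filter.biInter_finset_mem F).2 fun n _ => hc n)
    have h2 : (M ∩ ⋂ n ∈ F, {m | f n m = c n}).Infinite :=
      mem_infinite_of_le_cofinite U hUcof h1
    obtain ⟨m, hm, hgt⟩ := h2.exists_gt (F.sup id)
    refine ⟨m, hm.1, ?_, ?_⟩
    · intro n hn
      have := hm.2
      simp only [Set.mem_iInter] at this
      exact this n hn
    · intro n hn
      exact lt_of_le_of_lt (Finset.le_sup (f := id) hn) hgt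
  set g : Finset ℕ → ℕ := fun F => sInf (T F) with hg_def
  have hgT : ∀ F, g F ∈ T F := fun F => Nat.sInf_mem (hTne F)
  set seq : ℕ → ℕ := fun k => g (rSeqAux g k) with hseq_def
  have hseq_mem : ∀ k, seq k ∈ rSeqAux g (k + 1) := by
    intro k; simp [rSeqAux, hseq_def]
  have hlt : ∀ k l, k < l → seq k < seq l := by
    intro k l hkl
    have h1 : seq k ∈ rSeqAux g l := rSeqAux_mono g hkl (hseq_mem k)
    exact (hgT (rSeqAux g l)).2.2 _ h1
  have hseqM : ∀ k, seq k ∈ M := fun k => (hgT (rSeqAux g k)).1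
  have hpre : ∀ k l, k < l → f (seq k) (seq l) = c (seq k) := by
    intro k l hkl
    have h1 : seq k ∈ rSeqAux g l := rSeqAux_mono g hkl (hseq_mem k)
    exact (hgT (rSeqAux g l)).2.1 _ h1
  have hinj : Function.Injective seq := by
    have : StrictMono seq := strictMono_nat_of_lt_succ fun k => hlt k (k+1) (Nat.lt_succ_self k)
    exact this.injective
  have hmono : StrictMono seq := strictMono_nat_of_lt_succ fun k => hlt k (k+1) (Nat.lt_succ_self k)
  -- pigeonhole on the colour of seq k
  have : ({k | c (seq k) = true}).Infinite ∨ ({k | c (seq k) = false}).Infinite := by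
    by_contra h
    push_neg at h
    have : (Set.univ : Set ℕ).Finite := by
      have huniv : (Set.univ : Set ℕ) = {k | c (seq k) = true} ∪ {k | c (seq k) = false} := by
        ext k; simp only [Set.mem_univ, Set.mem_union, Set.mem_setOf_eq, true_iff]
        cases h' : c (seq k) <;> simp
      rw [huniv]; exact h.1.union h.2
    exact Set.infinite_univ this
  obtain hb | hb := this
  case _ => 
    refine ⟨seq '' {k | c (seq k) = true}, ?_, hb.image (hinj.injOn), true, ?_⟩
    · rintro _ ⟨k, _, rfl⟩; exact hseqM k
    · rintro _ _ ⟨k, hk, rfl⟩ ⟨l, hl, rfl⟩ hlt'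
      have : k < l := hmono.lt_iff_lt.mp hlt'
      rw [hpre k l this]; exact hk
  case _ =>
    refine ⟨seq '' {k | c (seq k) = false}, ?_, hb.image (hinj.injOn), false, ?_⟩
    · rintro _ ⟨k, _, rfl⟩; exact hseqM k
    · rintro _ _ ⟨k, hk, rfl⟩ ⟨l, hl, rfl⟩ hlt'
      have : k < l := hmono.lt_iff_lt.mp hlt'
      rw [hpre k l this]; exact hk

/-- Ultrafilter pigeonhole: a function landing in a finite set is constant on an
ultrafilter-large set. -/
lemma uf_pigeon (U : Ultrafilter ℕ) {S : Set ℕ} (hS : S ∈ U) {φ : ℕ → ℕ} {F : Finset ℕ}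
    (h : ∀ m ∈ S, φ m ∈ F) : ∃ a ∈ F, {m | φ m = a} ∈ U := by
  by_contra h'
  push_neg at h'
  have h1 : ∀ a ∈ F, {m | φ m = a}ᶜ ∈ U := fun a ha =>
    Ultrafilter.compl_mem_iff_notMem.2 (h' a ha)
  have h2 : (⋂ a ∈ F, {m | φ m = a}ᶜ) ∈ U := (Filter.biInter_finset_mem F).2 h1
  obtain ⟨m, hm1, hm2⟩ := Ultrafilter.nonempty_of_mem (Filter.inter_mem hS h2)
  simp only [Set.mem_iInter, Set.mem_compl_iff, Set.mem_setOf_eq] at hm2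
  exact hm2 (φ m) (h m hm1) rfl

section NormLemmas

variable {le : ℕ → ℕ → Prop} {p : ℝ}

lemma summable_ind {x : ℕ → ℝ} (hx : (Function.support x).Finite) (s : Set ℕ) :
    Summable (s.indicator fun j => x j ^ 2) := by
  apply summable_of_ne_finset_zero (s := hx.toFinset)
  intro b hb
  have hxb : x b = 0 := by
    by_contra h
    exact hb (hx.mem_toFinset.2 h)
  simp [Set.indicator_apply, hxb]

lemma ind_sq_nonneg (x : ℕ → ℝ) (s : Set ℕ) (i : ℕ) :
    0 ≤ s.indicator (fun j => x j ^ 2) i :=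
  Set.indicator_nonneg (fun j _ => sq_nonneg _) i

lemma segNorm_nonneg (x : ℕ → ℝ) (s : Set ℕ) : 0 ≤ segNorm x s := Real.sqrt_nonneg _

lemma segNorm_sq {x : ℕ → ℝ} (s : Set ℕ) :
    segNorm x s ^ 2 = ∑' i, s.indicator (fun j => x j ^ 2) i :=
  Real.sq_sqrt (tsum_nonneg (ind_sq_nonneg x s))

lemma segNorm_mono {x : ℕ → ℝ} (hx : (Function.support x).Finite) {s t : Set ℕ}
    (hsub : s ∩ Function.support x ⊆ t) : segNorm x s ≤ segNorm x t := by
  apply Real.sqrt_le_sqrt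
  apply Summable.tsum_le_tsum _ (summable_ind hx s) (summable_ind hx t)
  intro i
  by_cases hi : i ∈ s
  · by_cases hxi : x i = 0
    · calc s.indicator (fun j => x j ^ 2) i ≤ x i ^ 2 := by
            simp [Set.indicator_apply, hi]
        _ = 0 := by rw [hxi]; ring
        _ ≤ _ := ind_sq_nonneg x t i
  
    · have hit : i ∈ t := hsub ⟨hi, hxi⟩
      simp [Set.indicator_apply, hi, hit]
  · calc s.indicator (fun j => x j ^ 2) i = 0 := by simp [Set.indicator_apply, hi]
      _ ≤ _ := ind_sq_nonneg x t i

lemma segNorm_indicator (x : ℕ → ℝ) (s t : Set ℕ) :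
    segNorm (s.indicator x) t = segNorm x (s ∩ t) := by
  unfold segNorm
  congr 1
  apply tsum_congr
  intro i
  by_cases hs : i ∈ s <;> by_cases ht : i ∈ t <;>
    simp [Set.indicator_apply, hs, ht]

/-- The defining set of `jtNorm`. -/
def jtSet (le : ℕ → ℕ → Prop) (p : ℝ) (x : ℕ → ℝ) : Set ℝ :=
  { r : ℝ | ∃ (n : ℕ) (s : Fin n → Set ℕ),
    (∀ k, IsSegment le (s k)) ∧
    (∀ k l, k ≠ l → Disjoint (s k) (s l)) ∧
    r = (∑ k : Fin n, segNorm x (s k) ^ p) ^ (1 / p) }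

lemma jtNorm_eq (le : ℕ → ℕ → Prop) (p : ℝ) (x : ℕ → ℝ) :
    jtNorm le p x = sSup (jtSet le p x) := rfl

lemma zero_mem_jtSet (x : ℕ → ℝ) (hp : 2 < p) : (0 : ℝ) ∈ jtSet le p x := by
  have hp0 : p ≠ 0 := by linarith
  refine ⟨0, fun k => k.elim0, fun k => k.elim0, fun k l _ => k.elim0, ?_⟩
  rw [Finset.univ_eq_empty, Finset.sum_empty, Real.zero_rpow (one_div_ne_zero hp0)]

/-- sum of squares of seg norms over a disjoint family is at most the full square sum -/
lemma sum_sq_le {x : ℕ → ℝ} (hx : (Function.support x).Finite) {n : ℕ} (s : Fin n → Set ℕ)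
    (hdisj : ∀ k l, k ≠ l → Disjoint (s k) (s l)) :
    ∑ k : Fin n, segNorm x (s k) ^ (2:ℕ) ≤ segNorm x Set.univ ^ (2:ℕ) := by
  have h1 : ∀ k : Fin n, segNorm x (s k) ^ (2:ℕ) = ∑' i, (s k).indicator (fun j => x j ^ 2) i :=
    fun k => segNorm_sq (s k)
  simp only [h1, segNorm_sq]
  rw [← Summable.tsum_finsetSum (fun k _ => summable_ind hx (s k))]
  apply Summable.tsum_le_tsum _ (summable_sum (fun k _ => summable_ind hx (s k))) (summable_ind hx _)
  intro i
  by_cases h : ∃ k, i ∈ s k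
  · obtain ⟨k₀, hk₀⟩ := h
    have : ∑ k : Fin n, (s k).indicator (fun j => x j ^ 2) i
        = (s k₀).indicator (fun j => x j ^ 2) i := by
      apply Finset.sum_eq_single k₀
      · intro k _ hk
        have : i ∉ s k := fun hik => (hdisj k k₀ hk).ne_of_mem hik hk₀ rfl
        simp [Set.indicator_apply, this]
      · intro h; exact absurd (Finset.mem_univ k₀) h
    rw [this]
    simp [Set.indicator_apply, hk₀]
  · push_neg at h
    have : ∀ k : Fin n, (s k).indicator (fun j => x j ^ 2) i = 0 := by
      intro k; simp [Set.indicator_apply, h k]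
    simp [this, Set.indicator_apply, sq_nonneg]

lemma jt_mem_le {x : ℕ → ℝ} (hx : (Function.support x).Finite) (hp : 2 < p) :
    ∀ r ∈ jtSet le p x, r ≤ segNorm x Set.univ := by
  have hp0 : (0:ℝ) < p := by linarith
  rintro r ⟨n, s, hseg, hdisj, rfl⟩
  set R := segNorm x Set.univ with hR
  have hR0 : 0 ≤ R := segNorm_nonneg x _
  have haR : ∀ k, segNorm x (s k) ≤ R := fun k =>
    segNorm_mono hx (by intro i hi; exact Set.mem_univ i)
  rcases eq_or_lt_of_le hR0 with hR0' | hR0'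
  · -- R = 0 : all seg norms are 0
    have hz : ∀ k, segNorm x (s k) = 0 := fun k =>
      le_antisymm (by rw [← hR0'] at haR; exact haR k) (segNorm_nonneg x _)
    have : (∑ k : Fin n, segNorm x (s k) ^ p) = 0 := by
      apply Finset.sum_eq_zero; intro k _
      rw [hz k]; exact Real.zero_rpow (ne_of_gt hp0)
    rw [this, Real.zero_rpow (one_div_ne_zero (ne_of_gt hp0)), ← hR0']
  · -- R > 0
    have hstep : ∀ k, segNorm x (s k) ^ p ≤ R ^ (p - 2) * segNorm x (s k) ^ (2:ℕ) := by
      intro k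
      set a := segNorm x (s k) with ha
      have ha0 : 0 ≤ a := segNorm_nonneg x _
      rcases eq_or_lt_of_le ha0 with h0 | h0
      · rw [← h0, Real.zero_rpow (ne_of_gt hp0)]
        have : (0:ℝ) ^ (2:ℕ) = 0 := by norm_num
        rw [this, mul_zero]
      · have e1 : a ^ p = a ^ (p - 2) * a ^ (2:ℕ) := by
          rw [← Real.rpow_natCast a 2, ← Real.rpow_add h0]
          norm_num
        rw [e1]
        apply mul_le_mul_of_nonneg_right _ (by positivity)
        exact Real.rpow_le_rpow ha0 (haR k) (by linarith)
    have hsum : ∑ k : Fin n, segNorm x (s k) ^ p ≤ R ^ p := by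
      calc ∑ k : Fin n, segNorm x (s k) ^ p
          ≤ ∑ k : Fin n, R ^ (p - 2) * segNorm x (s k) ^ (2:ℕ) :=
            Finset.sum_le_sum fun k _ => hstep k
        _ = R ^ (p - 2) * ∑ k : Fin n, segNorm x (s k) ^ (2:ℕ) := by
            rw [Finset.mul_sum]
        _ ≤ R ^ (p - 2) * R ^ (2:ℕ) := by
            apply mul_le_mul_of_nonneg_left (sum_sq_le hx s hdisj)
            exact Real.rpow_nonneg hR0 _
        _ = R ^ p := by
            rw [← Real.rpow_natCast R 2, ← Real.rpow_add hR0']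
            norm_num
    calc (∑ k : Fin n, segNorm x (s k) ^ p) ^ (1/p)
        ≤ (R ^ p) ^ (1/p) := by
          apply Real.rpow_le_rpow _ hsum (by positivity)
          apply Finset.sum_nonneg
          intro k _; exact Real.rpow_nonneg (segNorm_nonneg x _) p
      _ = R := by
          rw [← Real.rpow_mul hR0, mul_one_div_cancel (ne_of_gt hp0), Real.rpow_one]

lemma jt_bddAbove {x : ℕ → ℝ} (hx : (Function.support x).Finite) (hp : 2 < p) :
    BddAbove (jtSet le p x) := ⟨segNorm x Set.univ, fun r hr => jt_mem_le hx hp r hr⟩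

lemma jtNorm_le_l2 {x : ℕ → ℝ} (hx : (Function.support x).Finite) (hp : 2 < p) :
    jtNorm le p x ≤ segNorm x Set.univ :=
  csSup_le ⟨0, zero_mem_jtSet x hp⟩ (jt_mem_le hx hp)

lemma segNorm_le_jtNorm {x : ℕ → ℝ} (hx : (Function.support x).Finite) (hp : 2 < p)
    {s : Set ℕ} (hs : IsSegment le s) : segNorm x s ≤ jtNorm le p x := by
  have hp0 : (0:ℝ) < p := by linarith
  apply le_csSup (jt_bddAbove hx hp)
  refine ⟨1, fun _ => s, fun _ => hs, fun k l hkl => absurd (Subsingleton.elim k l) hkl, ?_⟩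
  rw [Fin.sum_univ_one, ← Real.rpow_mul (segNorm_nonneg x s),
    mul_one_div_cancel (ne_of_gt hp0), Real.rpow_one]

/-- If `r` pairwise disjoint segments each carry `ε` of mass of `x`, and `jtNorm x = 1`,
then `r * ε ^ p ≤ 1`. -/
lemma factA {x : ℕ → ℝ} (hx : (Function.support x).Finite) (hp : 2 < p)
    (h1 : jtNorm le p x = 1) {ε : ℝ} (hε : 0 < ε) {r : ℕ} (t : Fin r → Set ℕ)
    (hseg : ∀ k, IsSegment le (t k)) (hdisj : ∀ k l, k ≠ l → Disjoint (t k) (t l))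
    (hbig : ∀ k, ε ≤ segNorm x (t k)) : (r : ℝ) * ε ^ p ≤ 1 := by
  have hp0 : (0:ℝ) < p := by linarith
  have hmem : (∑ k : Fin r, segNorm x (t k) ^ p) ^ (1/p) ∈ jtSet le p x :=
    ⟨r, t, hseg, hdisj, rfl⟩
  have hle1 : (∑ k : Fin r, segNorm x (t k) ^ p) ^ (1/p) ≤ 1 := by
    have := le_csSup (jt_bddAbove (le := le) hx hp) hmem
    rw [← jtNorm_eq, h1] at this; exact this
  have hsum : (r : ℝ) * ε ^ p ≤ ∑ k : Fin r, segNorm x (t k) ^ p := by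
    calc (r : ℝ) * ε ^ p = ∑ _k : Fin r, ε ^ p := by
          rw [Finset.sum_const, Finset.card_univ, Fintype.card_fin, nsmul_eq_mul]
      _ ≤ _ := Finset.sum_le_sum fun k _ => Real.rpow_le_rpow hε.le (hbig k) hp0.le
  have hb0 : (0:ℝ) ≤ (r : ℝ) * ε ^ p := by positivity
  have h2 : ((r : ℝ) * ε ^ p) ^ (1/p) ≤ 1 := by
    refine le_trans (Real.rpow_le_rpow hb0 hsum (by positivity)) hle1
  calc (r : ℝ) * ε ^ p = (((r : ℝ) * ε ^ p) ^ (1/p)) ^ p := by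
        rw [← Real.rpow_mul hb0, one_div_mul_cancel (ne_of_gt hp0), Real.rpow_one]
    _ ≤ 1 ^ p := Real.rpow_le_rpow (Real.rpow_nonneg hb0 _) h2 hp0.le
    _ = 1 := Real.one_rpow p

end NormLemmas

section TreeLemmas

variable {le : ℕ → ℕ → Prop} {p : ℝ}

lemma seg_comparable (hT : IsJTTree le) {s : Set ℕ} (hs : IsSegment le s) :
    ∀ a ∈ s, ∀ b ∈ s, le a b ∨ le b a := by
  obtain ⟨u, v, huv, rfl⟩ := hs
  intro a ha b hb
  exact hT.pred_linear v a b ha.2 hb.2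

lemma chat_isSegment (hT : IsJTTree le) (a : ℕ) : IsSegment le {k | le k a} := by
  have hPne : ({k | le k a} : Set ℕ).Nonempty := ⟨a, hT.refl a⟩
  set m₀ := sInf {k | le k a} with hm₀
  have hm₀P : m₀ ∈ {k | le k a} := Nat.sInf_mem hPne
  have hmin : ∀ b ∈ {k | le k a}, le m₀ b := by
    intro b hb
    rcases hT.pred_linear a m₀ b hm₀P hb with h | h
    · exact h
    · have h1 : b ≤ m₀ := hT.compat h
      have h2 : m₀ ≤ b := Nat.sInf_le hb
      have hbe : b = m₀ := le_antisymm h1 h2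
      rw [hbe]; exact hT.refl m₀
  refine ⟨m₀, a, hm₀P, ?_⟩
  ext k
  constructor
  · intro hk; exact ⟨hmin k hk, hk⟩
  · intro hk; exact hk.2

lemma supp_ind_subset (σ : Set ℕ) (f : ℕ → ℝ) :
    Function.support (σ.indicator f) ⊆ Function.support f := by
  intro i hi
  rw [Function.mem_support] at hi ⊢
  intro h
  apply hi
  classical
  rw [Set.indicator_apply]
  split <;> simp [h]

lemma big_seg {x : ℕ → ℝ} (hx : (Function.support x).Finite) (hp : 2 < p)
    {ε : ℝ} {s : Set ℕ} (h : ε ≤ jtNorm le p (s.indicator x)) : ε ≤ segNorm x s := by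
  have h1 : jtNorm le p (s.indicator x) ≤ segNorm (s.indicator x) Set.univ :=
    jtNorm_le_l2 (hx.subset (supp_ind_subset s x)) hp
  rw [segNorm_indicator, Set.inter_univ] at h1
  linarith

lemma big_nonempty {x : ℕ → ℝ} {ε : ℝ} (hε : 0 < ε) {s : Set ℕ}
    (h : ε ≤ segNorm x s) : (s ∩ Function.support x).Nonempty := by
  by_contra hne
  rw [Set.not_nonempty_iff_eq_empty] at hne
  have h0 : ∀ i, s.indicator (fun j => x j ^ 2) i = (fun _ => (0:ℝ)) i := by
    intro i
    by_cases hi : i ∈ s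
    · have hxi : x i = 0 := by
        by_contra hxi
        exact absurd (hne ▸ (⟨hi, hxi⟩ : i ∈ s ∩ Function.support x)) (Set.notMem_empty i)
      simp [Set.indicator_apply, hi, hxi]
    · simp [Set.indicator_apply, hi]
  have : segNorm x s = 0 := by
    unfold segNorm
    rw [tsum_congr h0, tsum_zero, Real.sqrt_zero]
  rw [this] at h
  linarith

lemma supp_nonempty {x : ℕ → ℝ} (hx : (Function.support x).Finite) (hp : 2 < p)
    (h1 : jtNorm le p x = 1) : (Function.support x).Nonempty := by
  by_contra h
  rw [Set.not_nonempty_iff_eq_empty] at h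
  have hx0 : ∀ i, x i = 0 := fun i => by
    by_contra h0
    exact absurd (h ▸ (Function.mem_support.2 h0)) (Set.notMem_empty i)
  have h2 : segNorm x Set.univ = 0 := by
    unfold segNorm
    have : ∀ i, (Set.univ : Set ℕ).indicator (fun j => x j ^ 2) i = (fun _ => (0:ℝ)) i := by
      intro i; simp [hx0]
    rw [tsum_congr this, tsum_zero, Real.sqrt_zero]
  have := jtNorm_le_l2 (le := le) hx hp
  rw [h1, h2] at this
  linarith

lemma block_lt {x : ℕ → ℕ → ℝ} (hblock : IsBlockSeq x)
    (hne : ∀ n, (Function.support (x n)).Nonempty) :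
    ∀ n m i j, n < m → x n i ≠ 0 → x m j ≠ 0 → i < j := by
  intro n m
  have key : ∀ m', n + 1 ≤ m' → ∀ i j, x n i ≠ 0 → x m' j ≠ 0 → i < j := by
    intro m' hm'
    induction m', hm' using Nat.le_induction with
    | base => exact fun i j hi hj => hblock.2 n i j hi hj
    | succ m' hm' ih =>
      intro i j hi hj
      obtain ⟨j', hj'⟩ := hne m'
      exact lt_trans (ih i j' hi hj') (hblock.2 m' j' j hj' hj)
  exact fun i j hnm => key m hnm i j

end TreeLemmas

/-- The heart of the matter: it is impossible that all pairs from an infinite set `M` are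
jointly `ε`-big on some segment. -/
lemma main_contra (le : ℕ → ℕ → Prop) (hT : IsJTTree le) (p : ℝ) (hp : 2 < p)
    (x : ℕ → ℕ → ℝ) (hblock : IsBlockSeq x)
    (hnorm : ∀ n, jtNorm le p (x n) = 1)
    (hbranch : ∀ σ, IsBranch le σ →
      Filter.Tendsto (fun n => jtNorm le p (σ.indicator (x n))) Filter.atTop (nhds 0))
    (ε : ℝ) (hε : 0 < ε) (M : Set ℕ) (hM : M.Infinite)
    (hbad : ∀ n m, n ∈ M → m ∈ M → n < m → ∃ s, IsSegment le s ∧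
      ε ≤ jtNorm le p (s.indicator (x n)) ∧ ε ≤ jtNorm le p (s.indicator (x m))) :
    False := by
  classical
  have hfin : ∀ n, (Function.support (x n)).Finite := hblock.1
  have hsuppne : ∀ n, (Function.support (x n)).Nonempty :=
    fun n => supp_nonempty (hfin n) hp (hnorm n)
  have hblk : ∀ n m i j, n < m → x n i ≠ 0 → x m j ≠ 0 → i < j := block_lt hblock hsuppne
  -- Skolemize the bad segments
  have hbad' : ∀ nm : ℕ × ℕ, ∃ s : Set ℕ, nm.1 ∈ M → nm.2 ∈ M → nm.1 < nm.2 →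
      IsSegment le s ∧ ε ≤ jtNorm le p (s.indicator (x nm.1)) ∧
        ε ≤ jtNorm le p (s.indicator (x nm.2)) := by
    rintro ⟨n, m⟩
    by_cases h : n ∈ M ∧ m ∈ M ∧ n < m
    · obtain ⟨s, hs⟩ := hbad n m h.1 h.2.1 h.2.2
      exact ⟨s, fun _ _ _ => hs⟩
    · exact ⟨∅, fun h1 h2 h3 => absurd ⟨h1, h2, h3⟩ h⟩
  choose S hS using hbad'
  -- the top point of `S (n,m)` inside the support of `x n`
  set aF : ℕ → ℕ → ℕ := fun n m => sSup (S (n, m) ∩ Function.support (x n)) with haF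
  have key : ∀ n m, n ∈ M → m ∈ M → n < m →
      aF n m ∈ S (n, m) ∧ aF n m ∈ Function.support (x n) ∧
      (∀ b ∈ S (n, m), b ∈ Function.support (x n) → le b (aF n m)) ∧
      ε ≤ segNorm (x n) {k | le k (aF n m)} := by
    intro n m hn hm hnm
    obtain ⟨hSseg, hb1, _hb2⟩ := hS (n, m) hn hm hnm
    have hεseg : ε ≤ segNorm (x n) (S (n, m)) := big_seg (hfin n) hp hb1
    have hne' : (S (n, m) ∩ Function.support (x n)).Nonempty := big_nonempty hε hεseg
    have hfin' : (S (n, m) ∩ Function.support (x n)).Finite :=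
      Set.Finite.inter_of_right (hfin n) _
    have hbdd := hfin'.bddAbove
    have hmem : aF n m ∈ S (n, m) ∩ Function.support (x n) := Nat.sSup_mem hne' hbdd
    have k3 : ∀ b ∈ S (n, m), b ∈ Function.support (x n) → le b (aF n m) := by
      intro b hbS hbsupp
      have hble : b ≤ aF n m := le_csSup hbdd ⟨hbS, hbsupp⟩
      rcases seg_comparable hT hSseg b hbS _ hmem.1 with h | h
      · exact h
      · have : aF n m ≤ b := hT.compat h
        have hba : b = aF n m := le_antisymm hble this
        rw [hba]; exact hT.refl _
    refine ⟨hmem.1, hmem.2, k3, ?_⟩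
    refine le_trans hεseg (segNorm_mono (hfin n) ?_)
    rintro i ⟨hiS, hisupp⟩
    exact k3 i hiS hisupp
  -- local antichain bound
  have bound : ∀ m ∈ M, ∀ (r : ℕ) (e : Fin r → ℕ), (∀ k, e k ∈ M) → (∀ k, e k < m) →
      (∀ k l, k ≠ l → ¬ le (aF (e k) m) (aF (e l) m)) → (r : ℝ) * ε ^ p ≤ 1 := by
    intro m hmM r e heM helt hinc
    have hSprop : ∀ k : Fin r, ∃ u v : ℕ, le u v ∧ S (e k, m) = {z | le u z ∧ le z v} :=
      fun k => (hS (e k, m) (heM k) hmM (helt k)).1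
    choose uF vF huv hSeq using hSprop
    have hkey : ∀ k : Fin r, aF (e k) m ∈ S (e k, m) ∧ aF (e k) m ∈ Function.support (x (e k)) ∧
        (∀ b ∈ S (e k, m), b ∈ Function.support (x (e k)) → le b (aF (e k) m)) ∧
        ε ≤ segNorm (x (e k)) {z | le z (aF (e k) m)} :=
      fun k => key (e k) m (heM k) hmM (helt k)
    set t : Fin r → Set ℕ := fun k => {j | le (aF (e k) m) j ∧ le j (vF k)} with ht
    have hseg : ∀ k, IsSegment le (t k) := by
      intro k
      have haS := (hkey k).1
      rw [hSeq k] at haS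
      exact ⟨aF (e k) m, vF k, haS.2, rfl⟩
    have hsub : ∀ k, S (e k, m) ∩ Function.support (x m) ⊆ t k := by
      rintro k j ⟨hjS, hjsupp⟩
      have hjv : le j (vF k) := by
        have := hjS; rw [hSeq k] at this; exact this.2
      refine ⟨?_, hjv⟩
      rcases seg_comparable hT (hS (e k, m) (heM k) hmM (helt k)).1 _ (hkey k).1 j hjS with h | h
      · exact h
      · -- le j (aF (e k) m) : impossible since aF < j in ℕ
        have h1 : aF (e k) m < j :=
          hblk (e k) m _ j (helt k) (Function.mem_support.1 (hkey k).2.1)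
            (Function.mem_support.1 hjsupp)
        have h2 : j ≤ aF (e k) m := hT.compat h
        omega
    have hbig : ∀ k, ε ≤ segNorm (x m) (t k) := by
      intro k
      have hb2 : ε ≤ jtNorm le p ((S (e k, m)).indicator (x m)) :=
        (hS (e k, m) (heM k) hmM (helt k)).2.2
      exact le_trans (big_seg (hfin m) hp hb2) (segNorm_mono (hfin m) (hsub k))
    have hdisj : ∀ k l, k ≠ l → Disjoint (t k) (t l) := by
      intro k l hkl
      rw [Set.disjoint_left]
      rintro z ⟨hzk, _⟩ ⟨hzl, _⟩
      rcases hT.pred_linear z _ _ hzk hzl with h | h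
      · exact hinc k l hkl h
      · exact hinc l k (Ne.symm hkl) h
    exact factA (hfin m) hp (hnorm m) hε t hseg hdisj hbig
  -- an ultrafilter containing M and all cofinite sets
  obtain ⟨U, hU⟩ := Ultrafilter.exists_le (Filter.cofinite ⊓ Filter.principal M)
    (h := hM.cofinite_inf_principal_neBot)
  have hUcof : (U : Filter ℕ) ≤ Filter.cofinite := hU.trans inf_le_left
  have hUM : M ∈ U := hU (Filter.mem_inf_of_right (Filter.mem_principal_self M))
  -- stabilize aF n · along the ultrafilter
  have hAex : ∀ n, ∃ av, n ∈ M →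
      av ∈ Function.support (x n) ∧ {m | m ∈ M ∧ n < m ∧ aF n m = av} ∈ U := by
    intro n
    by_cases hn : n ∈ M
    · have hIoi : Set.Ioi n ∈ U := by
        have h1 : (Set.Iic n)ᶜ ∈ Filter.cofinite := (Set.finite_Iic n).compl_mem_cofinite
        rw [Set.compl_Iic] at h1
        exact hUcof h1
      have hS' : M ∩ Set.Ioi n ∈ U := Filter.inter_mem hUM hIoi
      have hφ : ∀ m ∈ M ∩ Set.Ioi n, aF n m ∈ (hfin n).toFinset := by
        rintro m ⟨hmM, hnm⟩
        exact (hfin n).mem_toFinset.2 (key n m hn hmM hnm).2.1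
      obtain ⟨av, havF, hfib⟩ := uf_pigeon U hS' hφ
      refine ⟨av, fun _ => ⟨(hfin n).mem_toFinset.1 havF, ?_⟩⟩
      have : (M ∩ Set.Ioi n) ∩ {m | aF n m = av} ⊆ {m | m ∈ M ∧ n < m ∧ aF n m = av} := by
        rintro m ⟨⟨h1, h2⟩, h3⟩
        exact ⟨h1, h2, h3⟩
      exact Filter.mem_of_superset (Filter.inter_mem hS' hfib) this
    · exact ⟨0, fun h => absurd h hn⟩
  choose A hA using hAex
  -- global antichain bound for the limit points A
  have gbound : ∀ (r : ℕ) (e : Fin r → ℕ), (∀ k, e k ∈ M) →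
      (∀ k l, k ≠ l → ¬ le (A (e k)) (A (e l))) → (r : ℝ) * ε ^ p ≤ 1 := by
    intro r e heM hinc
    rcases Nat.eq_zero_or_pos r with hr | hr
    · subst hr; simp
    · have hfib : ∀ k : Fin r, {m | m ∈ M ∧ e k < m ∧ aF (e k) m = A (e k)} ∈ U :=
        fun k => (hA (e k) (heM k)).2
      have hint : (⋂ k : Fin r, {m | m ∈ M ∧ e k < m ∧ aF (e k) m = A (e k)}) ∈ U :=
        Filter.iInter_mem.2 hfib
      obtain ⟨m, hm⟩ := Ultrafilter.nonempty_of_mem hint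
      simp only [Set.mem_iInter, Set.mem_setOf_eq] at hm
      have hmM : m ∈ M := (hm ⟨0, hr⟩).1
      refine bound m hmM r e heM (fun k => (hm k).2.1) ?_
      intro k l hkl
      rw [(hm k).2.2, (hm l).2.2]
      exact hinc k l hkl
  -- choose r with r * ε^p > 1
  have hεp : (0 : ℝ) < ε ^ p := Real.rpow_pos_of_pos hε p
  obtain ⟨r, hr⟩ := exists_nat_gt (1 / ε ^ p)
  have hr1 : 1 < (r : ℝ) * ε ^ p := by
    rw [div_lt_iff₀ hεp] at hr
    linarith
  -- Ramsey for the comparability colouring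
  set f2 : ℕ → ℕ → Bool :=
    fun n n' => decide (le (A n) (A n') ∨ le (A n') (A n)) with hf2
  obtain ⟨N, hNM, hNinf, b, hbN⟩ := ramsey2 f2 M hM
  cases b with
  | false =>
    -- an antichain of size r : contradiction with gbound
    obtain ⟨F, hFN, hFcard⟩ := hNinf.exists_subset_card_eq r
    set e : Fin r → ℕ := fun k => (F.equivFin.symm (Fin.cast hFcard.symm k) : ℕ) with he
    have heN : ∀ k, e k ∈ N := fun k => hFN (F.equivFin.symm _).2
    have heM : ∀ k, e k ∈ M := fun k => hNM (heN k)
    have heinj : Function.Injective e := by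
      intro k l hkl
      have h1 := Subtype.ext hkl
      have h2 := F.equivFin.symm.injective h1
      exact Fin.cast_injective _ h2
    have hinc : ∀ k l, k ≠ l → ¬ le (A (e k)) (A (e l)) := by
      intro k l hkl hc
      have hne : e k ≠ e l := fun h => hkl (heinj h)
      rcases lt_or_gt_of_ne hne with h | h
      · have := hbN (e k) (e l) (heN k) (heN l) h
        rw [hf2] at this
        exact of_decide_eq_false this (Or.inl hc)
      · have := hbN (e l) (e k) (heN l) (heN k) h
        rw [hf2] at this
        exact of_decide_eq_false this (Or.inr hc)
    have := gbound r e heM hinc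
    linarith
  | true =>
    -- all A n for n ∈ N are pairwise comparable : they generate a branch
    have hcomp : ∀ n n', n ∈ N → n' ∈ N → le (A n) (A n') ∨ le (A n') (A n) := by
      intro n n' hn hn'
      rcases lt_trichotomy n n' with h | h | h
      · have := hbN n n' hn hn' h
        rw [hf2] at this
        exact of_decide_eq_true this
      · rw [h]; exact Or.inl (hT.refl _)
      · have := hbN n' n hn' hn h
        rw [hf2] at this
        exact (of_decide_eq_true this).symm
    set W : Set ℕ := ⋃ n ∈ N, {k | le k (A n)} with hW
    have hWchain : IsChain le W := by
      rintro z hz z' hz' hne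
      simp only [hW, Set.mem_iUnion, Set.mem_setOf_eq] at hz hz'
      obtain ⟨n, hn, hzn⟩ := hz
      obtain ⟨n', hn', hzn'⟩ := hz'
      rcases hcomp n n' hn hn' with h | h
      · exact hT.pred_linear (A n') z z' (hT.trans hzn h) hzn'
      · exact hT.pred_linear (A n) z z' hzn (hT.trans hzn' h)
    obtain ⟨σ, hσmax, hWσ⟩ := hWchain.exists_maxChain
    have hbr : IsBranch le σ := ⟨hσmax.1, fun τ hτ hστ => hσmax.2 hτ hστ⟩
    have key2 : ∀ n ∈ N, ε ≤ jtNorm le p (σ.indicator (x n)) := by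
      intro n hn
      obtain ⟨m, hmM, hnm, haeq⟩ := Ultrafilter.nonempty_of_mem (hA n (hNM hn)).2
      have h2 : ε ≤ segNorm (x n) {k | le k (A n)} := by
        have := (key n m (hNM hn) hmM hnm).2.2.2
        rwa [haeq] at this
      have hsub : {k | le k (A n)} ⊆ σ := by
        intro k hk
        apply hWσ
        simp only [hW, Set.mem_iUnion, Set.mem_setOf_eq]
        exact ⟨n, hn, hk⟩
      have e2 : segNorm (σ.indicator (x n)) {k | le k (A n)} = segNorm (x n) {k | le k (A n)} := by
        rw [segNorm_indicator, Set.inter_eq_self_of_subset_right hsub]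
      have h3 : segNorm (σ.indicator (x n)) {k | le k (A n)} ≤ jtNorm le p (σ.indicator (x n)) :=
        segNorm_le_jtNorm ((hfin n).subset (supp_ind_subset σ (x n))) hp (chat_isSegment hT (A n))
      rw [e2] at h3
      linarith
    -- contradiction with the branch hypothesis
    have hev : ∀ᶠ n in Filter.atTop, jtNorm le p (σ.indicator (x n)) < ε :=
      (hbranch σ hbr).eventually (gt_mem_nhds hε)
    rw [Filter.eventually_atTop] at hev
    obtain ⟨n₁, hn₁⟩ := hev
    obtain ⟨n, hnN, hn₁n⟩ := hNinf.exists_gt n₁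
    exact absurd (key2 n hnN) (not_le.2 (hn₁ n hn₁n.le))

theorem stmt1 (le : ℕ → ℕ → Prop) (hT : IsJTTree le) (p : ℝ) (hp : 2 < p)
    (x : ℕ → ℕ → ℝ) (hblock : IsBlockSeq x)
    (hnorm : ∀ n, jtNorm le p (x n) = 1)
    (hbranch : ∀ σ, IsBranch le σ →
      Tendsto (fun n => jtNorm le p (σ.indicator (x n))) atTop (nhds 0))
    (ε : ℝ) (hε : 0 < ε) (n₀ : ℕ) :
    ∃ L : Set ℕ, L.Infinite ∧ ∀ s, IsSegment le s → sInf s ≤ n₀ →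
      {n | n ∈ L ∧ ε ≤ jtNorm le p (s.indicator (x n))}.Subsingleton := by
  classical
  set f1 : ℕ → ℕ → Bool := fun n m => decide (∃ s, IsSegment le s ∧
    ε ≤ jtNorm le p (s.indicator (x n)) ∧ ε ≤ jtNorm le p (s.indicator (x m))) with hf1
  obtain ⟨N, _, hNinf, b, hbN⟩ := ramsey2 f1 Set.univ Set.infinite_univ
  cases b with
  | true =>
    exfalso
    apply main_contra le hT p hp x hblock hnorm hbranch ε hε N hNinf
    intro n m hn hm hnm
    have := hbN n m hn hm hnm
    rw [hf1] at this
    exact of_decide_eq_true this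
  | false =>
    refine ⟨N, hNinf, ?_⟩
    intro s hseg _ n hn m hm
    by_contra hne
    rcases lt_or_gt_of_ne hne with h | h
    · have := hbN n m hn.1 hm.1 h
      rw [hf1] at this
      exact of_decide_eq_false this ⟨s, hseg, hn.2, hm.2⟩
    · have := hbN m n hm.1 hn.1 h
      rw [hf1] at this
      exact of_decide_eq_false this ⟨s, hseg, hm.2, hn.2⟩
end

section
/- Let (x_n) be a normalized block sequence in (c₀₀, ‖·‖_{JT_{2,p}}). Then there exist an infinite set L ⊆ ℕ, an at most countable family of pairwise distinct branches (σ_i)_{i∈N} (N an initial interval of ℕ or N = ℕ) and a decreasing sequence of positive reals (c_i)_{i∈N} with ∑_{i∈N} c_i^p ≤ 1 such that lim_{n∈L} ‖x_n|_{σ_i}‖ = c_i > 0 for every i ∈ N, and lim_{n∈L} ‖x_n|_σ‖ = 0 for every branch σ ∉ {σ_i : i ∈ N}. -/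
open Set Filter Topology

/-- The sequence `(x n)` admits the `ℓ_p`-vector `(c i)_{i ∈ N}` with associated branches
`(σ i)_{i ∈ N}`, where `N` is an initial interval of `ℕ` or all of `ℕ`. -/
def AdmitsLpVector (le : ℕ → ℕ → Prop) (p : ℝ) (x : ℕ → ℕ → ℝ)
    (N : Set ℕ) (c : ℕ → ℝ) (σ : ℕ → Set ℕ) : Prop :=
  (∀ i j, i ≤ j → j ∈ N → i ∈ N) ∧
  (∀ i ∈ N, IsBranch le (σ i)) ∧
  (∀ i ∈ N, ∀ j ∈ N, i ≠ j → σ i ≠ σ j) ∧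
  (∀ i ∈ N, ∀ j ∈ N, i ≤ j → c j ≤ c i) ∧
  (∑' i : N, c i.1 ^ p) ≤ 1 ∧
  (∀ i ∈ N, 0 < c i ∧
    Tendsto (fun n => jtNorm le p ((σ i).indicator (x n))) atTop (nhds (c i))) ∧
  (∀ τ, IsBranch le τ → (∀ i ∈ N, τ ≠ σ i) →
    Tendsto (fun n => jtNorm le p (τ.indicator (x n))) atTop (nhds 0))

namespace JT5
open scoped Classical
variable {le : ℕ → ℕ → Prop}

theorem mem_branch_of_between (hT : IsJTTree le) {τ : Set ℕ} (hτ : IsBranch le τ)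
    {a b k : ℕ} (ha : a ∈ τ) (hb : b ∈ τ) (h1 : le a k) (h2 : le k b) : k ∈ τ := by
  by_cases hk : k ∈ τ
  · exact hk
  have hchain : IsChain le (insert k τ) := by
    refine hτ.1.insert ?_
    intro t ht hne
    rcases eq_or_ne t b with rfl | htb
    · exact Or.inl h2
    rcases hτ.1 ht hb htb with h | h
    · rcases hT.pred_linear b t k h h2 with h' | h'
      · exact Or.inr h'
      · exact Or.inl h'
    · exact Or.inl (hT.trans h2 h)
  have := hτ.2 _ hchain (Set.subset_insert _ _)
  rw [this]; exact Set.mem_insert _ _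

theorem branch_inter_bounded (hT : IsJTTree le) {σ τ : Set ℕ}
    (hσ : IsBranch le σ) (hτ : IsBranch le τ) (hne : σ ≠ τ) :
    ∃ B, ∀ k ∈ σ ∩ τ, k ≤ B := by
  have hssub : ¬ σ ⊆ τ := fun hsub => hne (hσ.2 _ hτ.1 hsub)
  obtain ⟨a, haσ, haτ⟩ := Set.not_subset.1 hssub
  refine ⟨a, fun k hk => ?_⟩
  have hkσ := hk.1; have hkτ := hk.2
  have hka : k ≠ a := fun h => haτ (h ▸ hkτ)
  rcases hσ.1 hkσ haσ hka with h | h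
  · exact hT.compat h
  -- le a k : show a ∈ τ, contradiction
  exfalso
  have hchain : IsChain le (insert a τ) := by
    refine hτ.1.insert ?_
    intro t ht hne'
    rcases eq_or_ne t k with rfl | htk
    · exact Or.inl h
    rcases hτ.1 ht hkτ htk with h' | h'
    · rcases hT.pred_linear k t a h' h with h'' | h''
      · exact Or.inr h''
      · exact Or.inl h''
    · exact Or.inl (hT.trans h h')
  have := hτ.2 _ hchain (Set.subset_insert _ _)
  exact haτ (this ▸ Set.mem_insert _ _)

theorem chain_exists_max (hT : IsJTTree le) {F : Finset ℕ} (hne : F.Nonempty)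
    (hc : ∀ a ∈ F, ∀ b ∈ F, a ≠ b → le a b ∨ le b a) :
    ∃ M ∈ F, ∀ a ∈ F, le a M := by
  refine ⟨F.max' hne, F.max'_mem hne, fun a ha => ?_⟩
  rcases eq_or_ne a (F.max' hne) with rfl | h
  · exact hT.refl _
  rcases hc a ha _ (F.max'_mem hne) h with h' | h'
  · exact h'
  · have := le_antisymm (F.le_max' a ha) (hT.compat h')
    exact this ▸ hT.refl _

theorem chain_exists_min (hT : IsJTTree le) {F : Finset ℕ} (hne : F.Nonempty)
    (hc : ∀ a ∈ F, ∀ b ∈ F, a ≠ b → le a b ∨ le b a) :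
    ∃ m ∈ F, ∀ a ∈ F, le m a := by
  refine ⟨F.min' hne, F.min'_mem hne, fun a ha => ?_⟩
  rcases eq_or_ne a (F.min' hne) with rfl | h
  · exact hT.refl _
  rcases hc a ha _ (F.min'_mem hne) h with h' | h'
  · have := le_antisymm (hT.compat h') (F.min'_le a ha)
    exact this ▸ hT.refl _
  · exact h'

theorem exists_branch_thru (k : ℕ) : ∃ τ, IsBranch le τ ∧ k ∈ τ := by
  have hch : IsChain le ({k} : Set ℕ) := Set.Subsingleton.isChain (Set.subsingleton_singleton)
  obtain ⟨M, hM, hsub⟩ := hch.exists_maxChain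
  exact ⟨M, ⟨hM.1, fun τ hτ h => hM.2 hτ h⟩, hsub rfl⟩

theorem branches_infinite (hT : IsJTTree le) : {σ : Set ℕ | IsBranch le σ}.Infinite := by
  have hS : {k | ImmSucc le 0 k}.Infinite := hT.succ_infinite 0
  have hincomp : ∀ k ∈ {k | ImmSucc le 0 k}, ∀ k' ∈ {k | ImmSucc le 0 k}, k ≠ k' →
      ¬ le k k' := by
    intro k hk k' hk' hne hle
    rcases hk'.2.2 k hk.1 hle with h | h
    · exact hk.2.1 h.symm
    · exact hne h
  classical
  choose b hb hbmem using fun k : ℕ => exists_branch_thru (le := le) k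
  haveI := hS.to_subtype
  refine Set.infinite_of_injective_forall_mem
    (f := fun k : {k | ImmSucc le 0 k} => b k.1) ?_ (fun k => hb k.1)
  intro k k' h
  by_contra hne
  have hne' : (k : ℕ) ≠ (k' : ℕ) := fun hh => hne (Subtype.ext hh)
  have h1 : (k : ℕ) ∈ b k.1 := hbmem k.1
  have heq : b k.1 = b k'.1 := h
  have h2 : (k' : ℕ) ∈ b k.1 := heq ▸ hbmem k'.1
  rcases (hb k.1).1 h1 h2 hne' with hle | hle
  · exact hincomp _ k.2 _ k'.2 hne' hle
  · exact hincomp _ k'.2 _ k.2 (Ne.symm hne') hle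

theorem segNorm_nonneg (y : ℕ → ℝ) (s : Set ℕ) : 0 ≤ segNorm y s := Real.sqrt_nonneg _

theorem indicator_sq_summable {y : ℕ → ℝ} (hy : (Function.support y).Finite) (s : Set ℕ) :
    Summable (s.indicator (fun j => (y j) ^ 2)) := by
  apply summable_of_ne_finset_zero (s := hy.toFinset)
  intro b hb
  have hyb : y b = 0 := by
    by_contra h; exact hb (hy.mem_toFinset.2 h)
  by_cases hbs : b ∈ s
  · simp [Set.indicator_of_mem hbs, hyb]
  · simp [Set.indicator_of_notMem hbs]

theorem segNorm_eq_sum {y : ℕ → ℝ} (hy : (Function.support y).Finite) (s : Set ℕ) :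
    segNorm y s = Real.sqrt (∑ i ∈ hy.toFinset.filter (· ∈ s), (y i) ^ 2) := by
  unfold segNorm
  congr 1
  rw [tsum_eq_sum (s := hy.toFinset.filter (· ∈ s)) ?h]
  · exact Finset.sum_congr rfl (fun i hi => Set.indicator_of_mem (Finset.mem_filter.1 hi).2 _)
  case h =>
    intro b hb
    by_cases hbs : b ∈ s
    · have : y b = 0 := by
        by_contra h
        exact hb (Finset.mem_filter.2 ⟨hy.mem_toFinset.2 h, hbs⟩)
      simp [Set.indicator_of_mem hbs, this]
    · simp [Set.indicator_of_notMem hbs]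

theorem segNorm_sq {y : ℕ → ℝ} (hy : (Function.support y).Finite) (s : Set ℕ) :
    segNorm y s ^ 2 = ∑ i ∈ hy.toFinset.filter (· ∈ s), (y i) ^ 2 := by
  rw [segNorm_eq_sum hy s, Real.sq_sqrt]
  exact Finset.sum_nonneg fun i _ => sq_nonneg _

theorem segNorm_congr {y : ℕ → ℝ} {s t : Set ℕ}
    (h : s ∩ Function.support y = t ∩ Function.support y) : segNorm y s = segNorm y t := by
  unfold segNorm
  congr 1
  apply tsum_congr
  intro i
  by_cases hyi : y i = 0
  · by_cases his : i ∈ s <;> by_cases hit : i ∈ t <;>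
      simp [Set.indicator_apply, his, hit, hyi]
  · have hsupp : i ∈ Function.support y := hyi
    have : i ∈ s ↔ i ∈ t := by
      constructor
      · intro hi; exact (h ▸ (Set.mem_inter hi hsupp) : i ∈ t ∩ _).1
      · intro hi
        have : i ∈ s ∩ Function.support y := h.symm ▸ (Set.mem_inter hi hsupp)
        exact this.1
    by_cases his : i ∈ s
    · rw [Set.indicator_of_mem his, Set.indicator_of_mem (this.1 his)]
    · rw [Set.indicator_of_notMem his, Set.indicator_of_notMem (fun ht => his (this.2 ht))]

theorem segNorm_indicator (y : ℕ → ℝ) (τ s : Set ℕ) :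
    segNorm (τ.indicator y) s = segNorm y (s ∩ τ) := by
  unfold segNorm
  congr 1
  apply tsum_congr
  intro i
  by_cases his : i ∈ s <;> by_cases hiτ : i ∈ τ <;>
    simp [Set.indicator_apply, his, hiτ, Set.mem_inter_iff]

theorem support_indicator_finite {y : ℕ → ℝ} (hy : (Function.support y).Finite) (τ : Set ℕ) :
    (Function.support (τ.indicator y)).Finite :=
  hy.subset (Function.support_subset_iff.2 fun i hi => by
    by_contra h
    have : τ.indicator y i = 0 := by
      by_cases hiτ : i ∈ τ
      · simp [Set.indicator_of_mem hiτ, Function.notMem_support.1 h]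
      · simp [Set.indicator_of_notMem hiτ]
    exact hi this)

def JSet (le : ℕ → ℕ → Prop) (p : ℝ) (x : ℕ → ℝ) : Set ℝ :=
  { r : ℝ | ∃ (n : ℕ) (s : Fin n → Set ℕ),
    (∀ k, IsSegment le (s k)) ∧
    (∀ k l, k ≠ l → Disjoint (s k) (s l)) ∧
    r = (∑ k : Fin n, segNorm x (s k) ^ p) ^ (1 / p) }

theorem jtNorm_eq (le : ℕ → ℕ → Prop) (p : ℝ) (x : ℕ → ℝ) :
    jtNorm le p x = sSup (JSet le p x) := rfl

variable {p : ℝ}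

theorem zero_mem_JSet (hp : p ≠ 0) (y : ℕ → ℝ) : (0:ℝ) ∈ JSet le p y := by
  refine ⟨0, Fin.elim0, (fun k => k.elim0), (fun k => k.elim0), ?_⟩
  rw [Finset.univ_eq_empty, Finset.sum_empty, Real.zero_rpow (by simpa using hp)]

theorem sum_rpow_le {ι : Type*} (hp2 : 2 ≤ p) (s : Finset ι) (a : ι → ℝ)
    (ha : ∀ k ∈ s, 0 ≤ a k) :
    ∑ k ∈ s, a k ^ p ≤ (∑ k ∈ s, a k ^ 2) ^ (p/2) := by
  set S := ∑ k ∈ s, a k ^ 2 with hSdef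
  have hS : 0 ≤ S := Finset.sum_nonneg fun k _ => sq_nonneg _
  have hsq : ∀ k ∈ s, a k ≤ Real.sqrt S := by
    intro k hk
    have h2 : a k ^ 2 ≤ S := Finset.single_le_sum (fun i _ => sq_nonneg (a i)) hk
    calc a k = Real.sqrt (a k ^ 2) := (Real.sqrt_sq (ha k hk)).symm
    _ ≤ Real.sqrt S := Real.sqrt_le_sqrt h2
  have key : ∀ k ∈ s, a k ^ p ≤ a k ^ 2 * Real.sqrt S ^ (p - 2) := by
    intro k hk
    have h1 : a k ^ p = a k ^ (2:ℝ) * a k ^ (p-2) := by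
      rw [← Real.rpow_add_of_nonneg (ha k hk) (by norm_num) (by linarith)]
      norm_num
    rw [h1, Real.rpow_two]
    exact mul_le_mul_of_nonneg_left
      (Real.rpow_le_rpow (ha k hk) (hsq k hk) (by linarith)) (sq_nonneg _)
  calc ∑ k ∈ s, a k ^ p ≤ ∑ k ∈ s, a k ^ 2 * Real.sqrt S ^ (p-2) := Finset.sum_le_sum key
  _ = S * Real.sqrt S ^ (p-2) := by rw [← Finset.sum_mul]
  _ = Real.sqrt S ^ (2:ℝ) * Real.sqrt S ^ (p-2) := by
      rw [Real.rpow_two, Real.sq_sqrt hS]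
  _ = Real.sqrt S ^ p := by
      rw [← Real.rpow_add_of_nonneg (Real.sqrt_nonneg _) (by norm_num) (by linarith)]
      norm_num
  _ = S ^ (p/2) := by
      rw [Real.sqrt_eq_rpow, ← Real.rpow_mul hS]
      congr 1; ring

theorem mem_JSet_le_sqrt (hp2 : 2 < p) {y : ℕ → ℝ} (hy : (Function.support y).Finite)
    {r : ℝ} (hr : r ∈ JSet le p y) :
    r ≤ Real.sqrt (∑ i ∈ hy.toFinset, y i ^ 2) := by
  obtain ⟨n, s, hseg, hdisj, rfl⟩ := hr
  have hp0 : (0:ℝ) < p := by linarith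
  set T := ∑ i ∈ hy.toFinset, y i ^ 2 with hTdef
  have hT : 0 ≤ T := Finset.sum_nonneg fun i _ => sq_nonneg _
  have hsum2 : ∑ k : Fin n, segNorm y (s k) ^ 2 ≤ T := by
    have hrw : ∀ k : Fin n, segNorm y (s k) ^ 2 = ∑ i ∈ hy.toFinset.filter (· ∈ s k), y i ^ 2 :=
      fun k => segNorm_sq hy (s k)
    rw [Finset.sum_congr rfl (fun k _ => hrw k)]
    rw [← Finset.sum_biUnion]
    · apply Finset.sum_le_sum_of_subset_of_nonneg
      · intro i hi
        obtain ⟨k, _, hk⟩ := Finset.mem_biUnion.1 hi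
        exact (Finset.mem_filter.1 hk).1
      · intro i _ _; exact sq_nonneg _
    · intro k _ l _ hkl
      have := hdisj k l hkl
      simp only [Finset.disjoint_left]
      intro i hik hil
      exact Set.disjoint_left.1 this (Finset.mem_filter.1 hik).2 (Finset.mem_filter.1 hil).2
  have h1 : ∑ k : Fin n, segNorm y (s k) ^ p ≤ T ^ (p/2) := by
    calc ∑ k : Fin n, segNorm y (s k) ^ p
        ≤ (∑ k : Fin n, segNorm y (s k) ^ 2) ^ (p/2) :=
          sum_rpow_le (le_of_lt hp2) _ _ (fun k _ => segNorm_nonneg y (s k))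
    _ ≤ T ^ (p/2) := Real.rpow_le_rpow
          (Finset.sum_nonneg fun k _ => sq_nonneg _) hsum2 (by linarith)
  calc (∑ k : Fin n, segNorm y (s k) ^ p) ^ (1/p)
      ≤ (T ^ (p/2)) ^ (1/p) := Real.rpow_le_rpow
        (Finset.sum_nonneg fun k _ => Real.rpow_nonneg (segNorm_nonneg y (s k)) p) h1
        (by positivity)
  _ = T ^ (1/2 : ℝ) := by
      rw [← Real.rpow_mul hT]
      congr 1
      field_simp
  _ = Real.sqrt T := (Real.sqrt_eq_rpow T).symm

theorem bddAbove_JSet (hp2 : 2 < p) {y : ℕ → ℝ} (hy : (Function.support y).Finite) :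
    BddAbove (JSet le p y) :=
  ⟨_, fun _ hr => mem_JSet_le_sqrt hp2 hy hr⟩

theorem le_jtNorm_of_mem (hp2 : 2 < p) {y : ℕ → ℝ} (hy : (Function.support y).Finite)
    {r : ℝ} (hr : r ∈ JSet le p y) : r ≤ jtNorm le p y :=
  le_csSup (bddAbove_JSet hp2 hy) hr

theorem jtNorm_nonneg (hp2 : 2 < p) {y : ℕ → ℝ} (hy : (Function.support y).Finite) :
    0 ≤ jtNorm le p y :=
  le_jtNorm_of_mem hp2 hy (zero_mem_JSet (by positivity) y)

theorem jtNorm_le (hp2 : 2 < p) {y : ℕ → ℝ} {M : ℝ}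
    (h : ∀ r ∈ JSet le p y, r ≤ M) : jtNorm le p y ≤ M :=
  csSup_le ⟨0, zero_mem_JSet (by positivity) y⟩ h

theorem rpow_inv_self {a : ℝ} (ha : 0 ≤ a) (hp0 : p ≠ 0) : (a ^ p) ^ (1/p) = a := by
  rw [← Real.rpow_mul ha]
  rw [mul_one_div_cancel hp0, Real.rpow_one]

theorem seg_le_jtNorm (hT : IsJTTree le) (hp2 : 2 < p) {y : ℕ → ℝ}
    (hy : (Function.support y).Finite) {τ : Set ℕ} (hτ : IsBranch le τ) :
    segNorm y τ ≤ jtNorm le p y := by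
  have hp0 : p ≠ 0 := by positivity
  set F := hy.toFinset.filter (· ∈ τ) with hF
  by_cases hFne : F.Nonempty
  · have hchain : ∀ a ∈ F, ∀ b ∈ F, a ≠ b → le a b ∨ le b a := by
      intro a ha b hb hab
      exact hτ.1 (Finset.mem_filter.1 ha).2 (Finset.mem_filter.1 hb).2 hab
    obtain ⟨m, hmF, hm⟩ := chain_exists_min hT hFne hchain
    obtain ⟨M, hMF, hM⟩ := chain_exists_max hT hFne hchain
    set s' : Set ℕ := {k | le m k ∧ le k M} with hs'
    have hseg : IsSegment le s' := ⟨m, M, hm M hMF, rfl⟩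
    have hsub : s' ⊆ τ := fun k hk =>
      mem_branch_of_between hT hτ (Finset.mem_filter.1 hmF).2 (Finset.mem_filter.1 hMF).2
        hk.1 hk.2
    have hcongr : segNorm y s' = segNorm y τ := by
      apply segNorm_congr
      ext i
      constructor
      · rintro ⟨hi1, hi2⟩; exact ⟨hsub hi1, hi2⟩
      · rintro ⟨hi1, hi2⟩
        have hiF : i ∈ F := Finset.mem_filter.2 ⟨hy.mem_toFinset.2 hi2, hi1⟩
        exact ⟨⟨hm i hiF, hM i hiF⟩, hi2⟩
    have hmem : segNorm y τ ∈ JSet le p y := by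
      refine ⟨1, fun _ => s', fun _ => hseg, ?_, ?_⟩
      · intro k l hkl; exact absurd (Subsingleton.elim k l) hkl
      · rw [Fin.sum_univ_one, hcongr, rpow_inv_self (segNorm_nonneg y τ) hp0]
    exact le_jtNorm_of_mem hp2 hy hmem
  · have : segNorm y τ = 0 := by
      rw [segNorm_eq_sum hy τ, ← hF, Finset.not_nonempty_iff_eq_empty.1 hFne,
        Finset.sum_empty, Real.sqrt_zero]
    rw [this]
    exact jtNorm_nonneg hp2 hy

theorem jtNorm_indicator_le (hp2 : 2 < p) {y : ℕ → ℝ}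
    (hy : (Function.support y).Finite) (τ : Set ℕ) :
    jtNorm le p (τ.indicator y) ≤ segNorm y τ := by
  have hp0 : p ≠ 0 := by positivity
  apply jtNorm_le hp2
  rintro r ⟨n, s, hseg, hdisj, rfl⟩
  have hrw : ∀ k : Fin n, segNorm (τ.indicator y) (s k) = segNorm y (s k ∩ τ) :=
    fun k => segNorm_indicator y τ (s k)
  have hsum2 : ∑ k : Fin n, segNorm y (s k ∩ τ) ^ 2 ≤ segNorm y τ ^ 2 := by
    rw [segNorm_sq hy τ]
    have hrw2 : ∀ k : Fin n, segNorm y (s k ∩ τ) ^ 2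
        = ∑ i ∈ hy.toFinset.filter (· ∈ s k ∩ τ), y i ^ 2 := fun k => by
      rw [segNorm_sq hy (s k ∩ τ)]
      apply Finset.sum_congr _ (fun _ _ => rfl)
      apply Finset.filter_congr_decidable
    rw [Finset.sum_congr rfl (fun k _ => hrw2 k), ← Finset.sum_biUnion]
    · apply Finset.sum_le_sum_of_subset_of_nonneg
      · intro i hi
        obtain ⟨k, _, hk⟩ := Finset.mem_biUnion.1 hi
        have := Finset.mem_filter.1 hk
        exact Finset.mem_filter.2 ⟨this.1, this.2.2⟩
      · intro i _ _; exact sq_nonneg _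
    · intro k _ l _ hkl
      simp only [Finset.disjoint_left]
      intro i hik hil
      exact Set.disjoint_left.1 (hdisj k l hkl)
        (Finset.mem_filter.1 hik).2.1 (Finset.mem_filter.1 hil).2.1
  have h1 : ∑ k : Fin n, segNorm y (s k ∩ τ) ^ p ≤ segNorm y τ ^ p := by
    calc ∑ k : Fin n, segNorm y (s k ∩ τ) ^ p
        ≤ (∑ k : Fin n, segNorm y (s k ∩ τ) ^ 2) ^ (p/2) :=
          sum_rpow_le (le_of_lt hp2) _ _ (fun k _ => segNorm_nonneg _ _)
    _ ≤ (segNorm y τ ^ 2) ^ (p/2) := Real.rpow_le_rpow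
          (Finset.sum_nonneg fun k _ => sq_nonneg _) hsum2 (by linarith)
    _ = segNorm y τ ^ p := by
        rw [← Real.rpow_two, ← Real.rpow_mul (segNorm_nonneg y τ)]
        congr 1
        ring
  calc (∑ k : Fin n, segNorm (τ.indicator y) (s k) ^ p) ^ (1/p)
      = (∑ k : Fin n, segNorm y (s k ∩ τ) ^ p) ^ (1/p) := by
        rw [Finset.sum_congr rfl (fun k _ => by rw [hrw k])]
  _ ≤ (segNorm y τ ^ p) ^ (1/p) := Real.rpow_le_rpow
        (Finset.sum_nonneg fun k _ => Real.rpow_nonneg (segNorm_nonneg _ _) p) h1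
        (by positivity)
  _ = segNorm y τ := rpow_inv_self (segNorm_nonneg y τ) hp0

theorem jtNorm_indicator_branch (hT : IsJTTree le) (hp2 : 2 < p) {y : ℕ → ℝ}
    (hy : (Function.support y).Finite) {τ : Set ℕ} (hτ : IsBranch le τ) :
    jtNorm le p (τ.indicator y) = segNorm y τ := by
  refine le_antisymm (jtNorm_indicator_le hp2 hy τ) ?_
  have h := seg_le_jtNorm hT hp2 (support_indicator_finite hy τ) hτ
  rwa [segNorm_indicator, Set.inter_self] at h

theorem support_nonempty_of_jtNorm_one (hp2 : 2 < p) {y : ℕ → ℝ}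
    (h : jtNorm le p y = 1) : (Function.support y).Nonempty := by
  have hp0 : p ≠ 0 := by positivity
  rw [Set.nonempty_iff_ne_empty]
  intro hsupp
  have hy0 : ∀ i, y i = 0 := by
    intro i
    by_contra h'
    exact absurd (hsupp ▸ h' : i ∈ (∅ : Set ℕ)) (Set.notMem_empty i)
  have hseg : ∀ s : Set ℕ, segNorm y s = 0 := by
    intro s
    unfold segNorm
    have : (s.indicator (fun j => (y j)^2)) = fun _ => 0 := by
      funext i
      by_cases his : i ∈ s
      · simp [Set.indicator_of_mem his, hy0 i]
      · simp [Set.indicator_of_notMem his]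
    rw [this, tsum_zero, Real.sqrt_zero]
  have hJ : JSet le p y = {0} := by
    apply Set.eq_singleton_iff_unique_mem.2
    refine ⟨zero_mem_JSet hp0 y, ?_⟩
    rintro r ⟨n, s, _, _, rfl⟩
    have : ∀ k : Fin n, segNorm y (s k) ^ p = 0 := fun k => by
      rw [hseg (s k), Real.zero_rpow hp0]
    rw [Finset.sum_congr rfl (fun k _ => this k), Finset.sum_const, smul_zero,
      Real.zero_rpow (by simpa using hp0)]
  rw [jtNorm_eq, hJ, csSup_singleton] at h
  norm_num at h

theorem key_sum (hT : IsJTTree le) (hp2 : 2 < p) {y : ℕ → ℝ}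
    (hy : (Function.support y).Finite) (hyn : jtNorm le p y ≤ 1)
    (m : ℕ) (σ : ℕ → Set ℕ) (hbr : ∀ i < m, IsBranch le (σ i))
    (B : ℕ) (hB : ∀ i < m, ∀ j < m, i ≠ j → ∀ k ∈ σ i ∩ σ j, k ≤ B)
    (hsupp : ∀ i ∈ Function.support y, B < i) :
    ∑ i ∈ Finset.range m, segNorm y (σ i) ^ p ≤ 1 := by
  have hp0 : p ≠ 0 := by positivity
  set G := hy.toFinset with hG
  set S₁ := (Finset.range m).filter (fun i => (G.filter (· ∈ σ i)).Nonempty) with hS₁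
  have hsum_eq : ∑ i ∈ Finset.range m, segNorm y (σ i) ^ p
      = ∑ i ∈ S₁, segNorm y (σ i) ^ p := by
    symm
    apply Finset.sum_subset (Finset.filter_subset _ _)
    intro i hi hni
    have hFe : G.filter (· ∈ σ i) = ∅ := by
      rw [← Finset.not_nonempty_iff_eq_empty]
      intro hne'
      exact hni (Finset.mem_filter.2 ⟨hi, hne'⟩)
    have : segNorm y (σ i) = 0 := by
      rw [segNorm_eq_sum hy (σ i)]
      have : hy.toFinset.filter (· ∈ σ i) = ∅ := hFe
      rw [this, Finset.sum_empty, Real.sqrt_zero]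
    rw [this, Real.zero_rpow hp0]
  rw [hsum_eq]
  -- construct segments
  have hex : ∀ i : ↥S₁, ∃ s' : Set ℕ, IsSegment le s' ∧ s' ⊆ σ i.1 ∧
      segNorm y (σ i.1) = segNorm y s' ∧ ∀ k ∈ s', B < k := by
    rintro ⟨i, hi⟩
    simp only
    obtain ⟨him, hFne⟩ := Finset.mem_filter.1 hi
    have him' : i < m := Finset.mem_range.1 him
    have hτ := hbr i him'
    have hchain : ∀ a ∈ G.filter (· ∈ σ i), ∀ b ∈ G.filter (· ∈ σ i), a ≠ b →
        le a b ∨ le b a := by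
      intro a ha b hb hab
      exact hτ.1 (Finset.mem_filter.1 ha).2 (Finset.mem_filter.1 hb).2 hab
    obtain ⟨mm, hmF, hm⟩ := chain_exists_min hT hFne hchain
    obtain ⟨MM, hMF, hM⟩ := chain_exists_max hT hFne hchain
    refine ⟨{k | le mm k ∧ le k MM}, ⟨mm, MM, hm MM hMF, rfl⟩, ?_, ?_, ?_⟩
    · intro k hk
      exact mem_branch_of_between hT hτ (Finset.mem_filter.1 hmF).2
        (Finset.mem_filter.1 hMF).2 hk.1 hk.2
    · apply segNorm_congr
      ext j
      constructor
      · rintro ⟨hj1, hj2⟩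
        have hjF : j ∈ G.filter (· ∈ σ i) :=
          Finset.mem_filter.2 ⟨hy.mem_toFinset.2 hj2, hj1⟩
        exact ⟨⟨hm j hjF, hM j hjF⟩, hj2⟩
      · rintro ⟨hj1, hj2⟩
        refine ⟨mem_branch_of_between hT hτ (Finset.mem_filter.1 hmF).2
          (Finset.mem_filter.1 hMF).2 hj1.1 hj1.2, hj2⟩
    · intro k hk
      have hmm : mm ∈ Function.support y := hy.mem_toFinset.1 (Finset.mem_filter.1 hmF).1
      exact lt_of_lt_of_le (hsupp mm hmm) (hT.compat hk.1)
  choose s' hseg hsub hcongr hgt using hex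
  have hdisj : ∀ a b : ↥S₁, a ≠ b → Disjoint (s' a) (s' b) := by
    intro a b hab
    rw [Set.disjoint_left]
    intro k hka hkb
    have hav : a.1 < m := Finset.mem_range.1 (Finset.mem_filter.1 a.2).1
    have hbv : b.1 < m := Finset.mem_range.1 (Finset.mem_filter.1 b.2).1
    have hne' : a.1 ≠ b.1 := fun h => hab (Subtype.ext h)
    have := hB a.1 hav b.1 hbv hne' k ⟨hsub a hka, hsub b hkb⟩
    exact absurd this (not_le.2 (hgt a k hka))
  set e : Fin S₁.card ≃ ↥S₁ := S₁.equivFin.symm with he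
  have hmem : (∑ k : Fin S₁.card, segNorm y (s' (e k)) ^ p) ^ (1/p) ∈ JSet le p y := by
    refine ⟨S₁.card, fun k => s' (e k), fun k => hseg (e k), ?_, rfl⟩
    intro k l hkl
    exact hdisj (e k) (e l) (fun h => hkl (e.injective h))
  have hsum_eq2 : ∑ k : Fin S₁.card, segNorm y (s' (e k)) ^ p
      = ∑ i ∈ S₁, segNorm y (σ i) ^ p := by
    rw [Equiv.sum_comp e (fun i => segNorm y (s' i) ^ p)]
    rw [← Finset.sum_coe_sort S₁ (fun i => segNorm y (σ i) ^ p)]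
    exact Finset.sum_congr rfl (fun i _ => by rw [hcongr i])
  have hr : (∑ i ∈ S₁, segNorm y (σ i) ^ p) ^ (1/p) ≤ 1 := by
    rw [← hsum_eq2]
    exact le_trans (le_jtNorm_of_mem hp2 hy hmem) hyn
  have hnn : 0 ≤ ∑ i ∈ S₁, segNorm y (σ i) ^ p :=
    Finset.sum_nonneg fun i _ => Real.rpow_nonneg (segNorm_nonneg _ _) p
  have := Real.rpow_le_rpow (Real.rpow_nonneg hnn _) hr (le_of_lt (by positivity : (0:ℝ) < p))
  rwa [Real.one_rpow, ← Real.rpow_mul hnn, one_div_mul_cancel hp0, Real.rpow_one] at this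

section Blocks
variable {x : ℕ → ℕ → ℝ}

theorem supp_x_large (hp2 : 2 < p) (hblock : IsBlockSeq x)
    (hnorm : ∀ n, jtNorm le p (x n) = 1) (B : ℕ) :
    ∀ᶠ n in atTop, ∀ i ∈ Function.support (x n), B < i := by
  have hne : ∀ n, (Function.support (x n)).Nonempty :=
    fun n => support_nonempty_of_jtNorm_one hp2 (hnorm n)
  choose ι hι using hne
  have hstep : ∀ n, ∀ j ∈ Function.support (x (n+1)), ι n < j := by
    intro n j hj
    exact hblock.2 n _ _ (hι n) hj
  have hmono : StrictMono ι := strictMono_nat_of_lt_succ (fun n => hstep n _ (hι (n+1)))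
  rw [eventually_atTop]
  refine ⟨B + 1, ?_⟩
  rintro (_ | n) hn i hi
  · omega
  · have h1 : ι n < i := hstep n i hi
    have h2 : n ≤ ι n := hmono.le_apply
    omega

theorem key_ev (hT : IsJTTree le) (hp2 : 2 < p) (hblock : IsBlockSeq x)
    (hnorm : ∀ n, jtNorm le p (x n) = 1)
    (m : ℕ) (σ : ℕ → Set ℕ) (hbr : ∀ i < m, IsBranch le (σ i))
    (hne : ∀ i < m, ∀ j < m, i ≠ j → σ i ≠ σ j) :
    ∀ᶠ n in atTop, ∑ i ∈ Finset.range m, segNorm (x n) (σ i) ^ p ≤ 1 := by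
  have hpair : ∀ i j : ℕ, ∃ B, i < m → j < m → i ≠ j → ∀ k ∈ σ i ∩ σ j, k ≤ B := by
    intro i j
    by_cases h : i < m ∧ j < m ∧ i ≠ j
    · obtain ⟨hi, hj, hij⟩ := h
      obtain ⟨B, hB⟩ := branch_inter_bounded hT (hbr i hi) (hbr j hj) (hne i hi j hj hij)
      exact ⟨B, fun _ _ _ => hB⟩
    · exact ⟨0, fun hi hj hij => absurd ⟨hi, hj, hij⟩ h⟩
  choose Bf hBf using hpair
  set B := ((Finset.range m) ×ˢ (Finset.range m)).sup (fun q => Bf q.1 q.2) with hBdef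
  filter_upwards [supp_x_large hp2 hblock hnorm B] with n hn
  apply key_sum hT hp2 (hblock.1 n) (le_of_eq (hnorm n)) m σ hbr B _ hn
  intro i hi j hj hij k hk
  refine le_trans (hBf i j hi hj hij k hk) ?_
  exact Finset.le_sup (f := fun q => Bf q.1 q.2) (b := (i, j))
    (Finset.mem_product.2 ⟨Finset.mem_range.2 hi, Finset.mem_range.2 hj⟩)

theorem h_nonneg (hp2 : 2 < p) (hblock : IsBlockSeq x) (n : ℕ) (τ : Set ℕ) :
    0 ≤ jtNorm le p (τ.indicator (x n)) :=
  jtNorm_nonneg hp2 (support_indicator_finite (hblock.1 n) τ)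

theorem h_le_one (hT : IsJTTree le) (hp2 : 2 < p) (hblock : IsBlockSeq x)
    (hnorm : ∀ n, jtNorm le p (x n) = 1) (n : ℕ) {τ : Set ℕ} (hτ : IsBranch le τ) :
    jtNorm le p (τ.indicator (x n)) ≤ 1 := by
  rw [jtNorm_indicator_branch hT hp2 (hblock.1 n) hτ]
  exact le_trans (seg_le_jtNorm hT hp2 (hblock.1 n) hτ) (le_of_eq (hnorm n))
end Blocks

theorem limsup_bdd {u : ℕ → ℝ} (hu : ∀ n, u n ∈ Set.Icc (0:ℝ) 1) :
    IsBoundedUnder (· ≤ ·) atTop u :=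
  isBoundedUnder_of ⟨1, fun n => (hu n).2⟩

theorem limsup_cobdd {u : ℕ → ℝ} (hu : ∀ n, u n ∈ Set.Icc (0:ℝ) 1) :
    IsCoboundedUnder (· ≤ ·) atTop u :=
  Filter.IsBoundedUnder.isCoboundedUnder_le (isBoundedUnder_of ⟨0, fun n => (hu n).1⟩)

theorem limsup_mem_Icc {u : ℕ → ℝ} (hu : ∀ n, u n ∈ Set.Icc (0:ℝ) 1) :
    limsup u atTop ∈ Set.Icc (0:ℝ) 1 := by
  constructor
  · exact le_limsup_of_frequently_le (Frequently.of_forall fun n => (hu n).1) (limsup_bdd hu)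
  · exact limsup_le_of_le (limsup_cobdd hu) (Eventually.of_forall fun n => (hu n).2)

theorem exists_subseq_tendsto_limsup {u : ℕ → ℝ} (hu : ∀ n, u n ∈ Set.Icc (0:ℝ) 1) :
    ∃ ψ : ℕ → ℕ, StrictMono ψ ∧ Tendsto (u ∘ ψ) atTop (nhds (limsup u atTop)) := by
  set L := limsup u atTop with hL
  have hfreq : ∀ j : ℕ, ∃ᶠ k in atTop, L - 1/((j:ℝ)+1) < u k ∧ u k < L + 1/((j:ℝ)+1) := by
    intro j
    have hje : (0:ℝ) < 1/((j:ℝ)+1) := by positivity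
    have h1 : ∃ᶠ k in atTop, L - 1/((j:ℝ)+1) < u k :=
      frequently_lt_of_lt_limsup (limsup_cobdd hu) (by linarith)
    have h2 : ∀ᶠ k in atTop, u k < L + 1/((j:ℝ)+1) :=
      eventually_lt_of_limsup_lt (by linarith) (limsup_bdd hu)
    exact h1.and_eventually h2
  obtain ⟨ψ, hψ, hP⟩ := extraction_forall_of_frequently hfreq
  refine ⟨ψ, hψ, ?_⟩
  have hg : Tendsto (fun j : ℕ => L - 1/((j:ℝ)+1)) atTop (nhds L) := by
    have := tendsto_const_nhds (x := L) (f := atTop (α := ℕ)) |>.sub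
      tendsto_one_div_add_atTop_nhds_zero_nat
    simpa using this
  have hh : Tendsto (fun j : ℕ => L + 1/((j:ℝ)+1)) atTop (nhds L) := by
    have := tendsto_const_nhds (x := L) (f := atTop (α := ℕ)) |>.add
      tendsto_one_div_add_atTop_nhds_zero_nat
    simpa using this
  exact tendsto_of_tendsto_of_tendsto_of_le_of_le hg hh
    (fun j => le_of_lt (hP j).1) (fun j => le_of_lt (hP j).2)

theorem abstract_extraction (hT : IsJTTree le) (hp2 : 2 < p) (h : ℕ → Set ℕ → ℝ)
    (hh : ∀ n τ, IsBranch le τ → h n τ ∈ Set.Icc (0:ℝ) 1)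
    (hkey : ∀ (m : ℕ) (σ : ℕ → Set ℕ), (∀ i < m, IsBranch le (σ i)) →
      (∀ i < m, ∀ j < m, i ≠ j → σ i ≠ σ j) →
      ∀ᶠ n in atTop, ∑ i ∈ Finset.range m, h n (σ i) ^ p ≤ 1) :
    ∃ l : ℕ → ℕ, StrictMono l ∧ ∃ (N : Set ℕ) (c : ℕ → ℝ) (σ : ℕ → Set ℕ),
      (∀ i j, i ≤ j → j ∈ N → i ∈ N) ∧
      (∀ i ∈ N, IsBranch le (σ i)) ∧
      (∀ i ∈ N, ∀ j ∈ N, i ≠ j → σ i ≠ σ j) ∧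
      (∀ i ∈ N, ∀ j ∈ N, i ≤ j → c j ≤ c i) ∧
      (∑' i : N, c i.1 ^ p) ≤ 1 ∧
      (∀ i ∈ N, 0 < c i ∧ Tendsto (fun n => h (l n) (σ i)) atTop (nhds (c i))) ∧
      (∀ τ, IsBranch le τ → (∀ i ∈ N, τ ≠ σ i) →
        Tendsto (fun n => h (l n) τ) atTop (nhds 0)) := by
  classical
  have hp0 : (0:ℝ) < p := by linarith
  set F : (ℕ → ℕ) → Finset (Set ℕ) → ℝ := fun φ prev =>
    sSup {r | ∃ τ, IsBranch le τ ∧ τ ∉ prev ∧ r = limsup (fun n => h (φ n) τ) atTop}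
    with hFdef
  have hFset_ne : ∀ (φ : ℕ → ℕ) (prev : Finset (Set ℕ)),
      {r | ∃ τ, IsBranch le τ ∧ τ ∉ prev ∧ r = limsup (fun n => h (φ n) τ) atTop}.Nonempty := by
    intro φ prev
    obtain ⟨τ, hτ⟩ := ((branches_infinite hT).diff prev.finite_toSet).nonempty
    exact ⟨_, τ, hτ.1, (by simpa using hτ.2), rfl⟩
  have hFset_bdd : ∀ (φ : ℕ → ℕ) (prev : Finset (Set ℕ)),
      BddAbove {r | ∃ τ, IsBranch le τ ∧ τ ∉ prev ∧ r = limsup (fun n => h (φ n) τ) atTop} := by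
    intro φ prev
    refine ⟨1, ?_⟩
    rintro r ⟨τ, hτ, -, rfl⟩
    exact (limsup_mem_Icc (fun n => hh (φ n) τ hτ)).2
  have hle_F : ∀ (φ : ℕ → ℕ) (prev : Finset (Set ℕ)) (τ : Set ℕ), IsBranch le τ → τ ∉ prev →
      limsup (fun n => h (φ n) τ) atTop ≤ F φ prev :=
    fun φ prev τ h1 h2 => le_csSup (hFset_bdd φ prev) ⟨τ, h1, h2, rfl⟩
  have hstep : ∀ (φ : ℕ → ℕ) (prev : Finset (Set ℕ)),
      ∃ q : (ℕ → ℕ) × Finset (Set ℕ) × Set ℕ × ℝ,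
        StrictMono φ →
        (StrictMono q.1 ∧ (∃ ψ : ℕ → ℕ, StrictMono ψ ∧ q.1 = φ ∘ ψ) ∧ prev ⊆ q.2.1 ∧
          (¬ 0 < F φ prev → q.1 = φ ∧ q.2.1 = prev) ∧
          (0 < F φ prev → IsBranch le q.2.2.1 ∧ q.2.2.1 ∉ prev ∧
            q.2.1 = insert q.2.2.1 prev ∧ 0 < q.2.2.2 ∧ F φ prev ≤ 2 * q.2.2.2 ∧
            Tendsto (fun n => h (q.1 n) q.2.2.1) atTop (nhds q.2.2.2))) := by
    intro φ prev
    by_cases hφ : StrictMono φ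
    · by_cases hpos : 0 < F φ prev
      · obtain ⟨r, ⟨τ, hτbr, hτnm, hreq⟩, hrgt⟩ :=
          exists_lt_of_lt_csSup (hFset_ne φ prev) (half_lt_self hpos)
        have hu : ∀ n, h (φ n) τ ∈ Set.Icc (0:ℝ) 1 := fun n => hh (φ n) τ hτbr
        obtain ⟨ψ, hψ, hten⟩ := exists_subseq_tendsto_limsup hu
        subst hreq
        refine ⟨(φ ∘ ψ, insert τ prev, τ, limsup (fun n => h (φ n) τ) atTop), fun _ => ?_⟩
        refine ⟨hφ.comp hψ, ⟨ψ, hψ, rfl⟩, Finset.subset_insert _ _,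
          fun hneg => absurd hpos hneg, fun _ => ⟨hτbr, hτnm, rfl, ?_, by linarith, hten⟩⟩
        have := half_pos hpos
        linarith
      · exact ⟨(φ, prev, ∅, 0), fun _ => ⟨hφ, ⟨id, strictMono_id, rfl⟩, Finset.Subset.refl _,
          fun _ => ⟨rfl, rfl⟩, fun hc => absurd hc hpos⟩⟩
    · exact ⟨(φ, prev, ∅, 0), fun hc => absurd hc hφ⟩
  choose step hstepP using hstep
  set St : ℕ → (ℕ → ℕ) × Finset (Set ℕ) :=
    fun i => Nat.rec ((id : ℕ → ℕ), (∅ : Finset (Set ℕ)))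
      (fun _ st => ((step st.1 st.2).1, (step st.1 st.2).2.1)) i with hSt
  set φs : ℕ → ℕ → ℕ := fun i => (St i).1 with hφs
  set prevs : ℕ → Finset (Set ℕ) := fun i => (St i).2 with hprevs
  set τs : ℕ → Set ℕ := fun i => (step (St i).1 (St i).2).2.2.1 with hτs
  set cs : ℕ → ℝ := fun i => (step (St i).1 (St i).2).2.2.2 with hcs
  have hmono : ∀ i, StrictMono (φs i) := by
    intro i; induction i with
    | zero => exact strictMono_id
    | succ i ih => exact (hstepP (φs i) (prevs i) ih).1
  set KK : ℕ → Prop := fun i => 0 < F (φs i) (prevs i) with hKK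
  have hψs : ∀ i, ∃ ψ, StrictMono ψ ∧ φs (i+1) = φs i ∘ ψ :=
    fun i => (hstepP (φs i) (prevs i) (hmono i)).2.1
  choose ψs hψmono hψeq using hψs
  have hprevsub : ∀ i, prevs i ⊆ prevs (i+1) :=
    fun i => (hstepP (φs i) (prevs i) (hmono i)).2.2.1
  have hfreeze : ∀ i, ¬ KK i → φs (i+1) = φs i ∧ prevs (i+1) = prevs i :=
    fun i hi => (hstepP (φs i) (prevs i) (hmono i)).2.2.2.1 hi
  have hKdata : ∀ i, KK i → IsBranch le (τs i) ∧ τs i ∉ prevs i ∧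
      prevs (i+1) = insert (τs i) (prevs i) ∧ 0 < cs i ∧ F (φs i) (prevs i) ≤ 2 * cs i ∧
      Tendsto (fun n => h (φs (i+1) n) (τs i)) atTop (nhds (cs i)) :=
    fun i hi => (hstepP (φs i) (prevs i) (hmono i)).2.2.2.2 hi
  set l : ℕ → ℕ := fun n => φs n n with hldef
  have hlmono : StrictMono l := by
    apply strictMono_nat_of_lt_succ
    intro n
    have h1 : φs (n+1) (n+1) = φs n (ψs n (n+1)) := by rw [hψeq n]; rfl
    calc l n = φs n n := rfl
    _ < φs n (n+1) := (hmono n) (Nat.lt_succ_self n)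
    _ ≤ φs n (ψs n (n+1)) := (hmono n).monotone ((hψmono n).le_apply)
    _ = l (n+1) := h1.symm
  have hconn : ∀ i j, i ≤ j → ∃ θ : ℕ → ℕ, (∀ k, k ≤ θ k) ∧ φs j = φs i ∘ θ := by
    intro i j hij
    induction j, hij using Nat.le_induction with
    | base => exact ⟨id, fun k => le_refl k, rfl⟩
    | succ j hij ih =>
      obtain ⟨θ, hθ1, hθ2⟩ := ih
      refine ⟨θ ∘ ψs j, fun k => le_trans ((hψmono j).le_apply) (hθ1 _), ?_⟩
      rw [hψeq j, hθ2]; rfl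
  have hE : ∀ i n, ∃ m, n ≤ m ∧ (i ≤ n → l n = φs i m) := by
    intro i n
    by_cases hin : i ≤ n
    · obtain ⟨θ, hθ1, hθ2⟩ := hconn i n hin
      refine ⟨θ n, hθ1 n, fun _ => ?_⟩
      show φs n n = φs i (θ n)
      rw [hθ2]; rfl
    · exact ⟨n, le_refl n, fun hc => absurd hc hin⟩
  choose E hE1 hE2 using hE
  have hEtop : ∀ i, Tendsto (E i) atTop atTop :=
    fun i => tendsto_atTop_mono (hE1 i) tendsto_id
  have hlim : ∀ i, KK i → Tendsto (fun n => h (l n) (τs i)) atTop (nhds (cs i)) := by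
    intro i hi
    have h1 := (hKdata i hi).2.2.2.2.2
    have h2 : Tendsto (fun n => h (φs (i+1) (E (i+1) n)) (τs i)) atTop (nhds (cs i)) :=
      h1.comp (hEtop (i+1))
    apply h2.congr'
    filter_upwards [eventually_ge_atTop (i+1)] with n hn
    exact (congrArg (fun z => h z (τs i)) (hE2 (i+1) n hn)).symm
  have hfreezeSt : ∀ i, ¬ KK i → ∀ j, i ≤ j → φs j = φs i ∧ prevs j = prevs i := by
    intro i hi j hij
    induction j, hij using Nat.le_induction with
    | base => exact ⟨rfl, rfl⟩
    | succ j hij ih =>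
      have hKj : ¬ KK j := by
        intro hK
        apply hi
        have hK' : 0 < F (φs j) (prevs j) := hK
        rw [ih.1, ih.2] at hK'
        exact hK'
      obtain ⟨e1, e2⟩ := hfreeze j hKj
      exact ⟨e1.trans ih.1, e2.trans ih.2⟩
  have hKinit : ∀ i j, i ≤ j → KK j → KK i := by
    intro i j hij hKj
    by_contra hKi
    have hfr := hfreezeSt i hKi j hij
    apply hKi
    have hKj' : 0 < F (φs j) (prevs j) := hKj
    rw [hfr.1, hfr.2] at hKj'
    exact hKj'
  have hprevmono : ∀ i j, i ≤ j → prevs i ⊆ prevs j := by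
    intro i j hij; induction j, hij using Nat.le_induction with
    | base => exact Finset.Subset.refl _
    | succ j hij ih => exact ih.trans (hprevsub j)
  have hprevmem : ∀ j σ', σ' ∈ prevs j → ∃ i, i < j ∧ KK i ∧ σ' = τs i := by
    intro j
    induction j with
    | zero =>
      intro σ' hσ'
      exact absurd hσ' (Finset.notMem_empty σ')
    | succ j ih =>
      intro σ' hσ'
      by_cases hKj : KK j
      · rw [(hKdata j hKj).2.2.1] at hσ'
        rcases Finset.mem_insert.1 hσ' with rfl | hmem
        · exact ⟨j, Nat.lt_succ_self j, hKj, rfl⟩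
        · obtain ⟨i, h1, h2, h3⟩ := ih σ' hmem
          exact ⟨i, Nat.lt_succ_of_lt h1, h2, h3⟩
      · rw [(hfreeze j hKj).2] at hσ'
        obtain ⟨i, h1, h2, h3⟩ := ih σ' hσ'
        exact ⟨i, Nat.lt_succ_of_lt h1, h2, h3⟩
  have hτmem : ∀ i, KK i → ∀ j, i < j → τs i ∈ prevs j := by
    intro i hi j hij
    have h1 : τs i ∈ prevs (i+1) := by
      rw [(hKdata i hi).2.2.1]; exact Finset.mem_insert_self _ _
    exact hprevmono (i+1) j hij h1
  have hτne : ∀ i j, KK i → KK j → i ≠ j → τs i ≠ τs j := by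
    intro i j hKi hKj hij heq
    rcases lt_or_gt_of_ne hij with hl | hl
    · exact (hKdata j hKj).2.1 (heq ▸ hτmem i hKi j hl)
    · exact (hKdata i hKi).2.1 (heq ▸ hτmem j hKj i hl)
  have hpart : ∀ m, (∀ i, i < m → KK i) → ∑ i ∈ Finset.range m, cs i ^ p ≤ 1 := by
    intro m hall
    have hbr : ∀ i < m, IsBranch le (τs i) := fun i hi => (hKdata i (hall i hi)).1
    have hne : ∀ i < m, ∀ j < m, i ≠ j → τs i ≠ τs j :=
      fun i hi j hj hij => hτne i j (hall i hi) (hall j hj) hij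
    have hev := hkey m τs hbr hne
    have hev2 : ∀ᶠ n in atTop, ∑ i ∈ Finset.range m, h (l n) (τs i) ^ p ≤ 1 :=
      (hlmono.tendsto_atTop).eventually hev
    have hten : Tendsto (fun n => ∑ i ∈ Finset.range m, h (l n) (τs i) ^ p) atTop
        (nhds (∑ i ∈ Finset.range m, cs i ^ p)) := by
      apply tendsto_finset_sum
      intro i hi
      exact (hlim i (hall i (Finset.mem_range.1 hi))).rpow_const (Or.inr (le_of_lt hp0))
    exact le_of_tendsto hten hev2
  have hother : ∀ τ, IsBranch le τ → (∀ i, KK i → τ ≠ τs i) →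
      Tendsto (fun n => h (l n) τ) atTop (nhds 0) := by
    intro τ hτ hτne'
    have hτnm : ∀ j, τ ∉ prevs j := by
      intro j hmem
      obtain ⟨i, -, hKi, heq⟩ := hprevmem j τ hmem
      exact hτne' i hKi heq
    rw [tendsto_order]
    constructor
    · intro a ha
      exact Eventually.of_forall (fun n => lt_of_lt_of_le ha (hh (l n) τ hτ).1)
    · intro ε hε
      have hexi : ∃ i, F (φs i) (prevs i) < ε := by
        by_cases hall : ∀ i, KK i
        · have hcs2 : ∃ i, cs i < ε/2 := by
            by_contra hno
            push_neg at hno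
            obtain ⟨m, hm⟩ := exists_nat_gt (1/(ε/2)^p)
            have hppos : (0:ℝ) < (ε/2)^p := Real.rpow_pos_of_pos (by linarith) p
            have h1 : (m:ℝ) * (ε/2)^p ≤ ∑ i ∈ Finset.range m, cs i ^ p := by
              have hterm : ∀ i ∈ Finset.range m, (ε/2:ℝ)^p ≤ cs i ^ p := fun i _ =>
                Real.rpow_le_rpow (by positivity) (hno i) (le_of_lt hp0)
              calc (m:ℝ) * (ε/2)^p = (Finset.range m).card • ((ε/2:ℝ)^p) := by
                    simp [nsmul_eq_mul]
              _ ≤ ∑ i ∈ Finset.range m, cs i ^ p := Finset.card_nsmul_le_sum _ _ _ hterm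
            have h2 := hpart m (fun i _ => hall i)
            have h3 : (1:ℝ) < (m:ℝ) * (ε/2)^p := by
              calc (1:ℝ) = (1/(ε/2)^p) * (ε/2)^p := by field_simp
              _ < m * (ε/2)^p := by exact mul_lt_mul_of_pos_right hm hppos
            linarith
          obtain ⟨i, hi⟩ := hcs2
          exact ⟨i, lt_of_le_of_lt ((hKdata i (hall i)).2.2.2.2.1) (by linarith)⟩
        · push_neg at hall
          obtain ⟨i, hi⟩ := hall
          have : ¬ 0 < F (φs i) (prevs i) := hi
          exact ⟨i, lt_of_le_of_lt (not_lt.1 this) hε⟩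
      obtain ⟨i, hFi⟩ := hexi
      have hls : limsup (fun n => h (φs i n) τ) atTop < ε :=
        lt_of_le_of_lt (hle_F (φs i) (prevs i) τ hτ (hτnm i)) hFi
      have hev : ∀ᶠ m in atTop, h (φs i m) τ < ε :=
        eventually_lt_of_limsup_lt hls (limsup_bdd (fun n => hh (φs i n) τ hτ))
      have hev2 : ∀ᶠ n in atTop, h (φs i (E i n)) τ < ε := (hEtop i).eventually hev
      filter_upwards [hev2, eventually_ge_atTop i] with n h1 h2
      rw [hE2 i n h2]
      exact h1
  refine ⟨l, hlmono, ?_⟩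
  by_cases hall : ∀ i, KK i
  · -- infinite case
    have hcspos : ∀ i, 0 < cs i := fun i => (hKdata i (hall i)).2.2.2.1
    have hthr : ∀ ε : ℝ, 0 < ε → {i | ε ≤ cs i}.Finite := by
      intro ε hε
      by_contra hinf
      have hinf' : {i | ε ≤ cs i}.Infinite := hinf
      obtain ⟨m, hm⟩ := exists_nat_gt (1/ε^p)
      obtain ⟨t, hts, htc⟩ := hinf'.exists_subset_card_eq m
      have hppos : (0:ℝ) < ε^p := Real.rpow_pos_of_pos hε p
      set M := (t.sup id) + 1 with hM
      have htsub : t ⊆ Finset.range M := fun i hi =>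
        Finset.mem_range.2 (Nat.lt_succ_of_le (Finset.le_sup (f := id) hi))
      have h1 : (m:ℝ) * ε^p ≤ ∑ i ∈ t, cs i ^ p := by
        have hterm : ∀ i ∈ t, (ε:ℝ)^p ≤ cs i ^ p := fun i hi =>
          Real.rpow_le_rpow (le_of_lt hε) (hts (Finset.mem_coe.2 hi)) (le_of_lt hp0)
        calc (m:ℝ) * ε^p = t.card • ((ε:ℝ)^p) := by rw [htc]; simp [nsmul_eq_mul]
        _ ≤ ∑ i ∈ t, cs i ^ p := Finset.card_nsmul_le_sum _ _ _ hterm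
      have h2 : ∑ i ∈ t, cs i ^ p ≤ ∑ i ∈ Finset.range M, cs i ^ p :=
        Finset.sum_le_sum_of_subset_of_nonneg htsub
          (fun i _ _ => Real.rpow_nonneg (le_of_lt (hcspos i)) p)
      have h3 := hpart M (fun i _ => hall i)
      have h4 : (1:ℝ) < (m:ℝ) * ε^p := by
        calc (1:ℝ) = (1/ε^p) * ε^p := by field_simp
        _ < m * ε^p := by exact mul_lt_mul_of_pos_right hm hppos
      linarith
    have hpick : ∀ picked : Finset ℕ, ∃ j, j ∉ picked ∧ ∀ i, i ∉ picked → cs i ≤ cs j := by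
      intro picked
      have hcompl : (↑picked : Set ℕ)ᶜ.Infinite := picked.finite_toSet.infinite_compl
      obtain ⟨j₀, hj₀⟩ := hcompl.nonempty
      have hj₀' : j₀ ∉ picked := by simpa using hj₀
      have hTfin : ({i | cs j₀ ≤ cs i} ∩ {i | i ∉ picked}).Finite :=
        (hthr (cs j₀) (hcspos j₀)).inter_of_left _
      have hj₀mem : j₀ ∈ hTfin.toFinset := by
        rw [Set.Finite.mem_toFinset]
        exact ⟨le_refl (cs j₀), hj₀'⟩
      obtain ⟨j, hjmem, hjmax⟩ := Finset.exists_max_image hTfin.toFinset cs ⟨j₀, hj₀mem⟩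
      rw [Set.Finite.mem_toFinset] at hjmem
      refine ⟨j, hjmem.2, ?_⟩
      intro i hi
      by_cases hcase : cs j₀ ≤ cs i
      · exact hjmax i (hTfin.mem_toFinset.2 ⟨hcase, hi⟩)
      · push_neg at hcase
        have := hjmax j₀ hj₀mem
        linarith
    choose A hA1 hA2 using hpick
    set St2 : ℕ → ℕ × Finset ℕ :=
      fun i => Nat.rec (A ∅, {A ∅}) (fun _ st => (A st.2, insert (A st.2) st.2)) i with hSt2
    set π : ℕ → ℕ := fun i => (St2 i).1 with hπ
    set picked : ℕ → Finset ℕ := fun i => (St2 i).2 with hpicked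
    have hpicksucc : ∀ i, picked (i+1) = insert (π (i+1)) (picked i) := fun i => rfl
    have hmempicked : ∀ i j, j ≤ i → π j ∈ picked i := by
      intro i
      induction i with
      | zero =>
        intro j hj
        rw [Nat.le_zero] at hj
        subst hj
        exact Finset.mem_singleton_self _
      | succ i ih =>
        intro j hj
        rcases Nat.le_succ_iff_eq_or_le.mp hj with rfl | hj'
        · rw [hpicksucc i]; exact Finset.mem_insert_self _ _
        · rw [hpicksucc i]; exact Finset.mem_insert_of_mem (ih j hj')
    have hπnot : ∀ i, π (i+1) ∉ picked i := fun i => hA1 (picked i)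
    have hπinj : Function.Injective π := by
      intro a b hab
      by_contra hne
      rcases lt_or_gt_of_ne hne with hl | hl
      · obtain ⟨b', rfl⟩ : ∃ b', b = b'+1 := ⟨b-1, by omega⟩
        apply hπnot b'
        rw [← hab]
        exact hmempicked b' a (by omega)
      · obtain ⟨a', rfl⟩ : ∃ a', a = a'+1 := ⟨a-1, by omega⟩
        apply hπnot a'
        rw [hab]
        exact hmempicked a' b (by omega)
    have hpickmono : ∀ i, picked i ⊆ picked (i+1) := fun i => by
      rw [hpicksucc i]; exact Finset.subset_insert _ _
    have hanti : ∀ i, cs (π (i+1)) ≤ cs (π i) := by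
      intro i
      cases i with
      | zero => exact hA2 ∅ (π 1) (Finset.notMem_empty _)
      | succ i =>
        have h1 : π (i+2) ∉ picked i := fun hmem => hπnot (i+1) (hpickmono i hmem)
        exact hA2 (picked i) (π (i+2)) h1
    have hantitone : Antitone (fun i => cs (π i)) := antitone_nat_of_succ_le hanti
    have hπsurj : Function.Surjective π := by
      intro j
      by_contra hj
      push_neg at hj
      have hmemchar : ∀ i, ∀ a ∈ picked i, ∃ b, b ≤ i ∧ π b = a := by
        intro i
        induction i with
        | zero =>
          intro a ha
          have ha' : a ∈ ({A ∅} : Finset ℕ) := ha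
          rw [Finset.mem_singleton] at ha'
          exact ⟨0, le_refl 0, ha'.symm⟩
        | succ i ih =>
          intro a ha
          rw [hpicksucc i] at ha
          rcases Finset.mem_insert.1 ha with rfl | hmem
          · exact ⟨i+1, le_refl _, rfl⟩
          · obtain ⟨b, hb1, hb2⟩ := ih a hmem
            exact ⟨b, le_trans hb1 (Nat.le_succ i), hb2⟩
      have hjnot : ∀ i, j ∉ picked i := by
        intro i hmem
        obtain ⟨b, -, hb⟩ := hmemchar i j hmem
        exact hj b hb
      have hle2 : ∀ i, cs j ≤ cs (π (i+1)) := fun i => hA2 (picked i) j (hjnot i)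
      have hTfin := hthr (cs j) (hcspos j)
      have hπtop : Tendsto π atTop atTop := by
        have := hπinj.tendsto_cofinite
        rwa [Nat.cofinite_eq_atTop] at this
      have hev : ∀ᶠ n in atTop, π n ∉ {i | cs j ≤ cs i} := by
        have hcompl : {i | cs j ≤ cs i}ᶜ ∈ (cofinite : Filter ℕ) := hTfin.compl_mem_cofinite
        rw [Nat.cofinite_eq_atTop] at hcompl
        have hev0 : ∀ᶠ m in atTop, m ∈ {i | cs j ≤ cs i}ᶜ := hcompl
        exact (hπtop.eventually hev0)
      obtain ⟨n, hn1, hn2⟩ := (hev.and (eventually_ge_atTop 1)).exists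
      obtain ⟨n', rfl⟩ : ∃ n', n = n'+1 := ⟨n-1, by omega⟩
      exact hn1 (hle2 n')
    refine ⟨Set.univ, fun i => cs (π i), fun i => τs (π i),
      fun i j _ _ => Set.mem_univ i,
      fun i _ => (hKdata (π i) (hall (π i))).1,
      fun i _ j _ hij => hτne (π i) (π j) (hall _) (hall _) (fun hc => hij (hπinj hc)),
      fun i _ j _ hij => hantitone hij, ?_, 
      fun i _ => ⟨hcspos (π i), hlim (π i) (hall (π i))⟩, ?_⟩
    · -- tsum
      have hnn : ∀ i, 0 ≤ cs (π i) ^ p := fun i => Real.rpow_nonneg (le_of_lt (hcspos _)) p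
      have hbound : ∀ m, ∑ i ∈ Finset.range m, cs (π i) ^ p ≤ 1 := by
        intro m
        set M := ((Finset.range m).image π).sup id + 1 with hM
        have h1 : ∑ i ∈ Finset.range m, cs (π i) ^ p
            = ∑ j ∈ (Finset.range m).image π, cs j ^ p :=
          (Finset.sum_image (f := fun j => cs j ^ p) (g := π) (s := Finset.range m)
            (fun a _ b _ hab => hπinj hab)).symm
        have h2 : (Finset.range m).image π ⊆ Finset.range M := fun j hj =>
          Finset.mem_range.2 (Nat.lt_succ_of_le (Finset.le_sup (f := id) hj))
        rw [h1]
        calc ∑ j ∈ (Finset.range m).image π, cs j ^ p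
            ≤ ∑ j ∈ Finset.range M, cs j ^ p :=
              Finset.sum_le_sum_of_subset_of_nonneg h2
                (fun j _ _ => Real.rpow_nonneg (le_of_lt (hcspos j)) p)
        _ ≤ 1 := hpart M (fun i _ => hall i)
      have := tsum_univ (fun i => cs (π i) ^ p)
      rw [this]
      exact Summable.tsum_le_of_sum_range_le (summable_of_sum_range_le hnn hbound) hbound
    · -- other branches
      intro τ hτ hne'
      apply hother τ hτ
      intro i hKi heq
      obtain ⟨a, rfl⟩ := hπsurj i
      exact hne' a (Set.mem_univ a) heq
  · -- finite case
    push_neg at hall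
    have hk' : ∃ i, ¬ KK i := hall
    set k := Nat.find hk' with hkdef
    have hkK : ¬ KK k := Nat.find_spec hk'
    have hallk : ∀ i, i < k → KK i := fun i hi => not_not.1 (Nat.find_min hk' hi)
    have hKiff : ∀ i, KK i ↔ i < k := by
      intro i
      constructor
      · intro hKi
        by_contra hge
        exact hkK (hKinit k i (not_lt.1 hge) hKi)
      · exact hallk i
    set ρ := Tuple.sort (fun a : Fin k => -cs a.1) with hρ
    have hρmono := Tuple.monotone_sort (fun a : Fin k => -cs a.1)
    set cc : ℕ → ℝ := fun i => if hik : i < k then cs (ρ ⟨i, hik⟩).1 else 0 with hcc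
    set σσ : ℕ → Set ℕ := fun i => if hik : i < k then τs (ρ ⟨i, hik⟩).1 else ∅ with hσσ
    have hccval : ∀ i (hik : i < k), cc i = cs (ρ ⟨i, hik⟩).1 := fun i hik => dif_pos hik
    have hσσval : ∀ i (hik : i < k), σσ i = τs (ρ ⟨i, hik⟩).1 := fun i hik => dif_pos hik
    refine ⟨Set.Iio k, cc, σσ,
      fun i j hij hj => Set.mem_Iio.2 (lt_of_le_of_lt hij (Set.mem_Iio.1 hj)), ?_, ?_, ?_, ?_, ?_, ?_⟩
    · intro i hi
      have hik := Set.mem_Iio.1 hi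
      rw [hσσval i hik]
      exact (hKdata _ (hallk _ (ρ ⟨i, hik⟩).isLt)).1
    · intro i hi j hj hij
      have hik := Set.mem_Iio.1 hi
      have hjk := Set.mem_Iio.1 hj
      rw [hσσval i hik, hσσval j hjk]
      apply hτne _ _ (hallk _ (ρ ⟨i, hik⟩).isLt) (hallk _ (ρ ⟨j, hjk⟩).isLt)
      intro hceq
      apply hij
      have : ρ ⟨i, hik⟩ = ρ ⟨j, hjk⟩ := Fin.ext hceq
      have := ρ.injective this
      exact congrArg Fin.val this
    · intro i hi j hj hij
      have hik := Set.mem_Iio.1 hi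
      have hjk := Set.mem_Iio.1 hj
      rw [hccval i hik, hccval j hjk]
      have hm : (⟨i, hik⟩ : Fin k) ≤ ⟨j, hjk⟩ := hij
      have := hρmono hm
      simp only [Function.comp_apply] at this
      linarith
    · -- tsum
      haveI : Fintype ↥(Set.Iio k) := (Set.finite_Iio k).fintype
      rw [tsum_fintype]
      set e : Fin k ≃ ↥(Set.Iio k) :=
        Fin.equivSubtype.trans (Equiv.subtypeEquivRight (fun x => (Set.mem_Iio).symm)) with he
      rw [← Equiv.sum_comp e (fun b : ↥(Set.Iio k) => cc b.1 ^ p)]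
      have hterm : ∀ a : Fin k, cc ((e a : ℕ)) ^ p = cs (ρ a).1 ^ p := by
        intro a
        have h1 : ((e a : ℕ)) = a.1 := rfl
        rw [h1, hccval a.1 a.isLt]
      rw [Finset.sum_congr rfl (fun a _ => hterm a)]
      rw [Equiv.sum_comp ρ (fun a : Fin k => cs a.1 ^ p)]
      rw [Fin.sum_univ_eq_sum_range (fun i => cs i ^ p) k]
      exact hpart k hallk
    · intro i hi
      have hik := Set.mem_Iio.1 hi
      rw [hccval i hik, hσσval i hik]
      exact ⟨(hKdata _ (hallk _ (ρ ⟨i, hik⟩).isLt)).2.2.2.1,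
        hlim _ (hallk _ (ρ ⟨i, hik⟩).isLt)⟩
    · intro τ hτ hne'
      apply hother τ hτ
      intro i hKi heq
      have hik : i < k := (hKiff i).1 hKi
      set a := ρ.symm ⟨i, hik⟩ with ha
      have h1 : ρ a = ⟨i, hik⟩ := ρ.apply_symm_apply _
      apply hne' a.1 (Set.mem_Iio.2 a.isLt)
      rw [hσσval a.1 a.isLt]
      have h2 : (⟨a.1, a.isLt⟩ : Fin k) = a := Fin.eta a a.isLt
      rw [h2, h1]
      exact heq
end JT5

theorem stmt5 (le : ℕ → ℕ → Prop) (hT : IsJTTree le) (p : ℝ) (hp : 2 < p)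
    (x : ℕ → ℕ → ℝ) (hblock : IsBlockSeq x)
    (hnorm : ∀ n, jtNorm le p (x n) = 1) :
    ∃ l : ℕ → ℕ, StrictMono l ∧ ∃ (N : Set ℕ) (c : ℕ → ℝ) (σ : ℕ → Set ℕ),
      AdmitsLpVector le p (fun n => x (l n)) N c σ := by
  classical
  have hh : ∀ n τ, IsBranch le τ →
      jtNorm le p (τ.indicator (x n)) ∈ Set.Icc (0:ℝ) 1 := fun n τ hτ =>
    ⟨JT5.h_nonneg hp hblock n τ, JT5.h_le_one hT hp hblock hnorm n hτ⟩
  have hkey : ∀ (m : ℕ) (σ : ℕ → Set ℕ), (∀ i < m, IsBranch le (σ i)) →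
      (∀ i < m, ∀ j < m, i ≠ j → σ i ≠ σ j) →
      ∀ᶠ n in atTop, ∑ i ∈ Finset.range m,
        jtNorm le p ((σ i).indicator (x n)) ^ p ≤ 1 := by
    intro m σ hbr hne
    filter_upwards [JT5.key_ev hT hp hblock hnorm m σ hbr hne] with n hn
    have heq : ∀ i ∈ Finset.range m,
        jtNorm le p ((σ i).indicator (x n)) ^ p = segNorm (x n) (σ i) ^ p := by
      intro i hi
      rw [JT5.jtNorm_indicator_branch hT hp (hblock.1 n) (hbr i (Finset.mem_range.1 hi))]
    rw [Finset.sum_congr rfl heq]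
    exact hn
  obtain ⟨l, hl, N, c, σ, h1, h2, h3, h4, h5, h6, h7⟩ :=
    JT5.abstract_extraction hT hp (fun n τ => jtNorm le p (τ.indicator (x n))) hh hkey
  exact ⟨l, hl, N, c, σ, h1, h2, h3, h4, h5, h6, h7⟩
end

section
/- Let (x_n) be a normalized block sequence in (c₀₀, ‖·‖_{JT_{2,p}}) admitting the non-zero ℓ_p-vector (c_i)_{i∈ℕ} with associated branches (σ_i)_{i∈ℕ}. Let (F_n) be a sequence of finite subsets of ℕ with max F_n < min F_{n+1} for all n, and for each n let (a_k)_{k∈F_n} be reals with ∑_{k∈F_n} a_k² = 1, and set y_n = ∑_{k∈F_n} a_k x_k. Then (y_n) admits (c_i)_{i∈ℕ} as its ℓ_p-vector with the same associated branches (σ_i)_{i∈ℕ}. -/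
open Set Filter Topology

lemma sq_sum_of_pairwise (s : Finset ℕ) (f : ℕ → ℝ)
    (h : ∀ k ∈ s, ∀ l ∈ s, k ≠ l → f k * f l = 0) :
    (∑ k ∈ s, f k) ^ 2 = ∑ k ∈ s, f k ^ 2 := by
  classical
  induction s using Finset.induction_on with
  | empty => simp
  | @insert b s' ha ih =>
    rw [Finset.sum_insert ha, Finset.sum_insert ha]
    have h1 : f b * ∑ k ∈ s', f k = 0 := by
      rw [Finset.mul_sum]
      refine Finset.sum_eq_zero fun k hk => ?_
      exact h b (Finset.mem_insert_self b s') k (Finset.mem_insert_of_mem hk)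
        (by rintro rfl; exact ha hk)
    have h2 := ih fun k hk l hl hkl =>
      h k (Finset.mem_insert_of_mem hk) l (Finset.mem_insert_of_mem hl) hkl
    nlinarith [h1, h2]

lemma jt_chain (le : ℕ → ℕ → Prop) (hrefl : ∀ n, le n n)
    (hcompat : ∀ {m n : ℕ}, le m n → m ≤ n) (p : ℝ) (hp : 2 < p)
    (x : ℕ → ℝ) (hx : (Function.support x).Finite)
    (hchain : IsChain le (Function.support x)) :
    jtNorm le p x = Real.sqrt (∑' j, x j ^ 2) := by
  classical
  have hp0' : (0:ℝ) < p := by linarith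
  have hp0 : p ≠ 0 := ne_of_gt hp0'
  set t := hx.toFinset with ht
  have hmemt : ∀ j, x j ≠ 0 → j ∈ t := fun j h => hx.mem_toFinset.mpr h
  have hxt : ∀ j ∉ t, x j = 0 := by
    intro j hj; by_contra h; exact hj (hmemt j h)
  have htsum : ∑' j, x j ^ 2 = ∑ j ∈ t, x j ^ 2 := by
    refine tsum_eq_sum ?_
    intro b hb; rw [hxt b hb]; ring
  have hseg : ∀ s : Set ℕ, segNorm x s = Real.sqrt (∑ j ∈ t, if j ∈ s then x j ^ 2 else 0) := by
    intro s
    rw [segNorm]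
    congr 1
    rw [tsum_eq_sum (s := t) (fun b hb => by simp [Set.indicator_apply, hxt b hb])]
    exact Finset.sum_congr rfl fun j _ => Set.indicator_apply s _ j
  set B := Real.sqrt (∑ j ∈ t, x j ^ 2) with hBdef
  have hB0 : 0 ≤ B := Real.sqrt_nonneg _
  have hB2 : B ^ 2 = ∑ j ∈ t, x j ^ 2 :=
    Real.sq_sqrt (Finset.sum_nonneg fun j _ => sq_nonneg _)
  set S := { r : ℝ | ∃ (n : ℕ) (s : Fin n → Set ℕ),
    (∀ k, IsSegment le (s k)) ∧
    (∀ k l, k ≠ l → Disjoint (s k) (s l)) ∧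
    r = (∑ k : Fin n, segNorm x (s k) ^ p) ^ (1 / p) } with hS
  have hub : ∀ r ∈ S, r ≤ B := by
    rintro r ⟨n, s, hseg', hdisj, rfl⟩
    have hnn : ∀ k : Fin n, 0 ≤ segNorm x (s k) := fun k => by
      rw [hseg]; exact Real.sqrt_nonneg _
    have hk2 : ∀ k : Fin n, segNorm x (s k) ^ 2 = ∑ j ∈ t, if j ∈ s k then x j ^ 2 else 0 := by
      intro k; rw [hseg]
      exact Real.sq_sqrt (Finset.sum_nonneg fun j _ => by positivity)
    have hsum2 : ∑ k : Fin n, segNorm x (s k) ^ 2 ≤ B ^ 2 := by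
      rw [hB2]
      calc ∑ k : Fin n, segNorm x (s k) ^ 2
          = ∑ j ∈ t, ∑ k : Fin n, (if j ∈ s k then x j ^ 2 else 0) := by
            simp_rw [hk2]; exact Finset.sum_comm
        _ ≤ ∑ j ∈ t, x j ^ 2 := by
            refine Finset.sum_le_sum fun j _ => ?_
            by_cases hj : ∃ k, j ∈ s k
            · obtain ⟨k0, hk0⟩ := hj
              rw [Finset.sum_eq_single k0 (fun k _ hk => by
                rw [if_neg]; exact fun hj' => (hdisj k k0 hk).le_bot ⟨hj', hk0⟩) (by simp)]
              rw [if_pos hk0]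
            · push_neg at hj
              rw [Finset.sum_eq_zero fun k _ => if_neg (hj k)]
              exact sq_nonneg _
    have hle : ∀ k : Fin n, segNorm x (s k) ≤ B := by
      intro k
      have h1 : segNorm x (s k) ^ 2 ≤ B ^ 2 :=
        le_trans (Finset.single_le_sum (f := fun k => segNorm x (s k) ^ 2)
          (fun k _ => sq_nonneg _) (Finset.mem_univ k)) hsum2
      nlinarith [hnn k, hB0]
    have hpow : ∀ k : Fin n, segNorm x (s k) ^ p ≤ B ^ (p - 2) * segNorm x (s k) ^ 2 := by
      intro k
      have e1 : segNorm x (s k) ^ p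
          = segNorm x (s k) ^ (p - 2) * segNorm x (s k) ^ (2:ℕ) := by
        rw [← Real.rpow_natCast (segNorm x (s k)) 2,
          ← Real.rpow_add' (hnn k) (by push_cast; intro h; linarith)]
        norm_num
      rw [e1]
      exact mul_le_mul_of_nonneg_right
        (Real.rpow_le_rpow (hnn k) (hle k) (by linarith)) (sq_nonneg _)
    have hBp : B ^ (p - 2) * B ^ (2:ℕ) = B ^ p := by
      rw [← Real.rpow_natCast B 2, ← Real.rpow_add' hB0 (by push_cast; intro h; linarith)]
      norm_num
    have hsump : ∑ k : Fin n, segNorm x (s k) ^ p ≤ B ^ p := by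
      calc ∑ k : Fin n, segNorm x (s k) ^ p
          ≤ ∑ k : Fin n, B ^ (p - 2) * segNorm x (s k) ^ 2 :=
            Finset.sum_le_sum fun k _ => hpow k
        _ = B ^ (p - 2) * ∑ k : Fin n, segNorm x (s k) ^ 2 := by rw [Finset.mul_sum]
        _ ≤ B ^ (p - 2) * B ^ 2 :=
            mul_le_mul_of_nonneg_left hsum2 (Real.rpow_nonneg hB0 _)
        _ = B ^ p := hBp
    calc (∑ k : Fin n, segNorm x (s k) ^ p) ^ (1 / p)
        ≤ (B ^ p) ^ (1 / p) :=
          Real.rpow_le_rpow (Finset.sum_nonneg fun k _ => Real.rpow_nonneg (hnn k) p)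
            hsump (by positivity)
      _ = B := by rw [← Real.rpow_mul hB0, mul_one_div_cancel hp0, Real.rpow_one]
  have hmem : B ∈ S := by
    by_cases hne : t.Nonempty
    · set n0 := t.max' hne with hn0
      set m0 := t.min' hne with hm0
      have hmax : ∀ j ∈ t, le j n0 := by
        intro j hj
        rcases eq_or_ne j n0 with h | hne'
        · rw [h]; exact hrefl n0
        · rcases hchain (hx.mem_toFinset.mp hj) (hx.mem_toFinset.mp (t.max'_mem hne)) hne' with h | h
          · exact h
          · exact absurd (le_antisymm (t.le_max' j hj) (hcompat h)) hne'
      have hmin : ∀ j ∈ t, le m0 j := by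
        intro j hj
        rcases eq_or_ne m0 j with h | hne'
        · rw [← h]; exact hrefl m0
        · rcases hchain (hx.mem_toFinset.mp (t.min'_mem hne)) (hx.mem_toFinset.mp hj) hne' with h | h
          · exact h
          · exact absurd (le_antisymm (hcompat h) (t.min'_le j hj)) fun h' => hne' h'.symm
      have hmn : le m0 n0 := hmax m0 (t.min'_mem hne)
      refine ⟨1, fun _ => {k | le m0 k ∧ le k n0}, fun _ => ⟨m0, n0, hmn, rfl⟩,
        fun k l hkl => absurd (Subsingleton.elim k l) hkl, ?_⟩
      have hsegB : segNorm x {k | le m0 k ∧ le k n0} = B := by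
        rw [hseg]
        congr 1
        exact Finset.sum_congr rfl fun j hj => if_pos ⟨hmin j hj, hmax j hj⟩
      rw [Fin.sum_univ_one, hsegB, ← Real.rpow_mul hB0, mul_one_div_cancel hp0, Real.rpow_one]
    · have ht0 : t = ∅ := Finset.not_nonempty_iff_eq_empty.mp hne
      have hB00 : B = 0 := by rw [hBdef, ht0]; simp
      refine ⟨0, Fin.elim0, fun k => k.elim0, fun k _ _ => k.elim0, ?_⟩
      rw [hB00, show (∑ k : Fin 0, segNorm x (Fin.elim0 k) ^ p) = 0 from by simp,
        Real.zero_rpow (one_div_ne_zero hp0)]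
  rw [jtNorm, htsum]
  exact le_antisymm (csSup_le ⟨B, hmem⟩ hub) (le_csSup ⟨B, hub⟩ hmem)


lemma tsum_sq_decomp (τ : Set ℕ) (Fn : Finset ℕ) (a : ℕ → ℝ) (x : ℕ → ℕ → ℝ)
    (hfin : ∀ k, (Function.support (x k)).Finite)
    (hdisj : ∀ k l, k ≠ l → ∀ j, x k j ≠ 0 → x l j = 0)
    (y : ℕ → ℝ) (hy : y = fun j => ∑ k ∈ Fn, a k * x k j) :
    ∑' j, (τ.indicator y) j ^ 2 = ∑ k ∈ Fn, a k ^ 2 * ∑' j, (τ.indicator (x k)) j ^ 2 := by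
  classical
  set t := Fn.biUnion fun k => (hfin k).toFinset with htdef
  have hts : ∀ k ∈ Fn, ∀ j, x k j ≠ 0 → j ∈ t := by
    intro k hk j hj
    exact Finset.mem_biUnion.mpr ⟨k, hk, (hfin k).mem_toFinset.mpr hj⟩
  have hy0 : ∀ j ∉ t, y j = 0 := by
    intro j hj
    rw [hy]
    refine Finset.sum_eq_zero fun k hk => ?_
    rcases eq_or_ne (x k j) 0 with h | h
    · rw [h, mul_zero]
    · exact absurd (hts k hk j h) hj
  have hL : ∑' j, (τ.indicator y) j ^ 2 = ∑ j ∈ t, (τ.indicator y) j ^ 2 := by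
    refine tsum_eq_sum fun b hb => ?_
    simp [Set.indicator_apply, hy0 b hb]
  have hR : ∀ k ∈ Fn, ∑' j, (τ.indicator (x k)) j ^ 2 = ∑ j ∈ t, (τ.indicator (x k)) j ^ 2 := by
    intro k hk
    refine tsum_eq_sum fun b hb => ?_
    have : x k b = 0 := by
      by_contra h; exact hb (hts k hk b h)
    simp [Set.indicator_apply, this]
  have hpt : ∀ j, (τ.indicator y) j ^ 2 = ∑ k ∈ Fn, a k ^ 2 * (τ.indicator (x k)) j ^ 2 := by
    intro j
    by_cases hj : j ∈ τ
    · simp only [Set.indicator_of_mem hj, hy]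
      rw [sq_sum_of_pairwise Fn (fun k => a k * x k j) (fun k hk l hl hkl => by
        show a k * x k j * (a l * x l j) = 0
        rcases eq_or_ne (x k j) 0 with h | h
        · rw [h]; ring
        · rw [hdisj k l hkl j h]; ring)]
      exact Finset.sum_congr rfl fun k _ => by ring
    · simp [Set.indicator_of_notMem hj]
  calc ∑' j, (τ.indicator y) j ^ 2
      = ∑ j ∈ t, (τ.indicator y) j ^ 2 := hL
    _ = ∑ j ∈ t, ∑ k ∈ Fn, a k ^ 2 * (τ.indicator (x k)) j ^ 2 :=
        Finset.sum_congr rfl fun j _ => hpt j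
    _ = ∑ k ∈ Fn, ∑ j ∈ t, a k ^ 2 * (τ.indicator (x k)) j ^ 2 := Finset.sum_comm
    _ = ∑ k ∈ Fn, a k ^ 2 * ∑ j ∈ t, (τ.indicator (x k)) j ^ 2 :=
        Finset.sum_congr rfl fun k _ => (Finset.mul_sum _ _ _).symm
    _ = ∑ k ∈ Fn, a k ^ 2 * ∑' j, (τ.indicator (x k)) j ^ 2 :=
        Finset.sum_congr rfl fun k hk => by rw [hR k hk]

lemma conv_lemma (F : ℕ → Finset ℕ) (hFmin : ∀ n, ∀ k ∈ F n, n ≤ k)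
    (a : ℕ → ℝ) (ha : ∀ n, ∑ k ∈ F n, a k ^ 2 = 1)
    (g : ℕ → ℝ) (L : ℝ) (hL : 0 ≤ L) (hg : Tendsto g atTop (nhds L)) :
    Tendsto (fun n => Real.sqrt (∑ k ∈ F n, a k ^ 2 * g k ^ 2)) atTop (nhds L) := by
  have h2 : Tendsto (fun k => g k ^ 2) atTop (nhds (L ^ 2)) := by
    simpa [sq] using hg.mul hg
  have hsum : Tendsto (fun n => ∑ k ∈ F n, a k ^ 2 * g k ^ 2) atTop (nhds (L ^ 2)) := by
    rw [Metric.tendsto_atTop] at h2 ⊢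
    intro ε hε
    obtain ⟨N, hN⟩ := h2 (ε / 2) (by linarith)
    refine ⟨N, fun n hn => ?_⟩
    have e1 : ∑ k ∈ F n, a k ^ 2 * g k ^ 2 - L ^ 2
        = ∑ k ∈ F n, a k ^ 2 * (g k ^ 2 - L ^ 2) := by
      have e0 : ∑ k ∈ F n, a k ^ 2 * (g k ^ 2 - L ^ 2)
          = ∑ k ∈ F n, a k ^ 2 * g k ^ 2 - ∑ k ∈ F n, a k ^ 2 * L ^ 2 := by
        rw [← Finset.sum_sub_distrib]
        exact Finset.sum_congr rfl fun k _ => by ring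
      have e2 : ∑ k ∈ F n, a k ^ 2 * L ^ 2 = L ^ 2 := by
        rw [← Finset.sum_mul, ha n, one_mul]
      rw [e0, e2]
    have key : |∑ k ∈ F n, a k ^ 2 * g k ^ 2 - L ^ 2| ≤ ε / 2 := by
      rw [e1]
      calc |∑ k ∈ F n, a k ^ 2 * (g k ^ 2 - L ^ 2)|
          ≤ ∑ k ∈ F n, |a k ^ 2 * (g k ^ 2 - L ^ 2)| := Finset.abs_sum_le_sum_abs _ _
        _ ≤ ∑ k ∈ F n, a k ^ 2 * (ε / 2) := by
            refine Finset.sum_le_sum fun k hk => ?_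
            rw [abs_mul, abs_of_nonneg (sq_nonneg (a k))]
            refine mul_le_mul_of_nonneg_left ?_ (sq_nonneg (a k))
            have := hN k (le_trans hn (hFmin n k hk))
            rw [Real.dist_eq] at this
            linarith
        _ = ε / 2 := by rw [← Finset.sum_mul, ha n, one_mul]
    rw [Real.dist_eq]
    linarith
  have := (Real.continuous_sqrt.tendsto (L ^ 2)).comp hsum
  simpa [Function.comp_def, Real.sqrt_sq hL] using this


theorem stmt7 (le : ℕ → ℕ → Prop) (hT : IsJTTree le) (p : ℝ) (hp : 2 < p)
    (x : ℕ → ℕ → ℝ) (hblock : IsBlockSeq x)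
    (hnorm : ∀ n, jtNorm le p (x n) = 1)
    (c : ℕ → ℝ) (σ : ℕ → Set ℕ)
    (hvec : AdmitsLpVector le p x Set.univ c σ)
    (F : ℕ → Finset ℕ) (hFne : ∀ n, (F n).Nonempty)
    (hF : ∀ n, ∀ i ∈ F n, ∀ j ∈ F (n + 1), i < j)
    (a : ℕ → ℝ) (ha : ∀ n, ∑ k ∈ F n, a k ^ 2 = 1)
    (y : ℕ → ℕ → ℝ) (hy : ∀ n, y n = fun j => ∑ k ∈ F n, a k * x k j) :
    AdmitsLpVector le p y Set.univ c σ := by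
  classical
  obtain ⟨h1, h2, h3, h4, h5, h6, h7⟩ := hvec
  -- supports are nonempty
  have hsuppne : ∀ n, (Function.support (x n)).Nonempty := by
    intro n
    rw [Set.nonempty_iff_ne_empty]
    intro h
    have hz : x n = fun _ => 0 := by
      funext j
      exact Function.support_eq_empty_iff.mp h ▸ rfl
    have := hnorm n
    rw [jt_chain le hT.refl hT.compat p hp (x n) (h ▸ Set.finite_empty)
      (h ▸ Set.pairwise_empty _)] at this
    rw [hz] at this
    simp at this
  -- blocks have strictly increasing supports
  have hstep : ∀ d k i j, x k i ≠ 0 → x (k + d + 1) j ≠ 0 → i < j := by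
    intro d
    induction d with
    | zero => exact fun k i j hi hj => hblock.2 k i j hi hj
    | succ d ih =>
      intro k i j hi hj
      obtain ⟨i', hi'⟩ := hsuppne (k + d + 1)
      have e : k + (d + 1) + 1 = (k + d + 1) + 1 := by omega
      rw [e] at hj
      exact lt_trans (ih k i i' hi hi') (hblock.2 (k + d + 1) i' j hi' hj)
  have hlt : ∀ k l, k < l → ∀ i j, x k i ≠ 0 → x l j ≠ 0 → i < j := by
    intro k l hkl i j hi hj
    have e : l = k + (l - k - 1) + 1 := by omega
    exact hstep (l - k - 1) k i j hi (e ▸ hj)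
  have hdisj : ∀ k l, k ≠ l → ∀ j, x k j ≠ 0 → x l j = 0 := by
    intro k l hkl j hk
    by_contra hl
    rcases lt_or_gt_of_ne hkl with h | h
    · exact lt_irrefl j (hlt k l h j j hk hl)
    · exact lt_irrefl j (hlt l k h j j hl hk)
  -- min F n ≥ n
  have hFmin : ∀ n, ∀ k ∈ F n, n ≤ k := by
    intro n
    induction n with
    | zero => exact fun k _ => Nat.zero_le k
    | succ n ih =>
      intro k hk
      obtain ⟨k', hk'⟩ := hFne n
      have := hF n k' hk' k hk
      have := ih k' hk'
      omega
  -- the key convergence transfer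
  have main : ∀ τ : Set ℕ, IsChain le τ → ∀ L : ℝ, 0 ≤ L →
      Tendsto (fun n => jtNorm le p (τ.indicator (x n))) atTop (nhds L) →
      Tendsto (fun n => jtNorm le p (τ.indicator (y n))) atTop (nhds L) := by
    intro τ hchain L hL hg
    have hindfin : ∀ f : ℕ → ℝ, (Function.support f).Finite →
        (Function.support (τ.indicator f)).Finite := fun f hf =>
      hf.subset (by rw [Set.support_indicator]; exact Set.inter_subset_right)
    have hindchain : ∀ f : ℕ → ℝ, IsChain le (Function.support (τ.indicator f)) :=
      fun f => hchain.mono (by rw [Set.support_indicator]; exact Set.inter_subset_left)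
    set g : ℕ → ℝ := fun k => jtNorm le p (τ.indicator (x k)) with hgdef
    have heq : ∀ n, jtNorm le p (τ.indicator (y n))
        = Real.sqrt (∑ k ∈ F n, a k ^ 2 * g k ^ 2) := by
      intro n
      have hyfin : (Function.support (y n)).Finite := by
        refine Set.Finite.subset (Set.Finite.biUnion (F n).finite_toSet
          (fun k _ => hblock.1 k)) ?_
        intro j hj
        rw [hy n] at hj
        simp only [Function.mem_support] at hj
        obtain ⟨k, hkF, hkj⟩ := Finset.exists_ne_zero_of_sum_ne_zero hj
        exact Set.mem_biUnion hkF (fun h : x k j = 0 => hkj (by rw [h, mul_zero]))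
      have ey : jtNorm le p (τ.indicator (y n))
          = Real.sqrt (∑' j, (τ.indicator (y n)) j ^ 2) :=
        jt_chain le hT.refl hT.compat p hp _ (hindfin _ hyfin) (hindchain _)
      have ed : ∑' j, (τ.indicator (y n)) j ^ 2
          = ∑ k ∈ F n, a k ^ 2 * ∑' j, (τ.indicator (x k)) j ^ 2 :=
        tsum_sq_decomp τ (F n) a x hblock.1 hdisj (y n) (hy n)
      have eg : ∀ k, ∑' j, (τ.indicator (x k)) j ^ 2 = g k ^ 2 := by
        intro k
        have e := jt_chain le hT.refl hT.compat p hp (τ.indicator (x k))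
          (hindfin _ (hblock.1 k)) (hindchain _)
        show ∑' j, (τ.indicator (x k)) j ^ 2 = (jtNorm le p (τ.indicator (x k))) ^ 2
        rw [e, Real.sq_sqrt (tsum_nonneg fun j => sq_nonneg _)]
      rw [ey, ed, Finset.sum_congr rfl fun k _ => by rw [eg k]]
    exact (conv_lemma F hFmin a ha g L hL hg).congr fun n => (heq n).symm
  refine ⟨h1, h2, h3, h4, h5, fun i _ => ⟨(h6 i trivial).1, ?_⟩, fun τ hτ hne => ?_⟩
  · exact main (σ i) (h2 i trivial).1 (c i) (le_of_lt (h6 i trivial).1) (h6 i trivial).2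
  · exact main τ hτ.1 0 le_rfl (h7 τ hτ hne)
end
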